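/- arXiv:2201.03901 — 9 statements merged into one kernel-verified Lean document; each statement's English description precedes it below -/
import Mathlib

section
/- Let Φ be an epimorphism from a thick projective plane P onto a thin projective plane Δ of order (1,1) (i.e. an ordinary triangle). Then for every line L of P, Φ maps the set of points incident with L onto the set of points incident with Φ(L). -/
/-- A point-line incidence geometry. -/
structure IncGeom where
  P : Type
  L : Type
  I : P → L → Prop

namespace IncGeom

variable (G : IncGeom)

/-- The bipartite incidence graph on points and lines. -/
def incGraph : SimpleGraph (G.P ⊕ G.L) where
  Adj x y :=
    (∃ p l, x = Sum.inl p ∧ y = Sum.inr l ∧ G.I p l) ∨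
    (∃ p l, x = Sum.inr l ∧ y = Sum.inl p ∧ G.I p l)
  symm := by
    constructor
    rintro x y (⟨p, l, rfl, rfl, h⟩ | ⟨p, l, rfl, rfl, h⟩)
    · exact Or.inr ⟨p, l, rfl, rfl, h⟩
    · exact Or.inl ⟨p, l, rfl, rfl, h⟩
  loopless := by
    constructor
    rintro x (⟨p, l, h1, h2, _⟩ | ⟨p, l, h1, h2, _⟩) <;> subst h1 <;> simp_all

/-- A weak generalized `n`-gon: the incidence graph has diameter `n` and girth `2n`. -/
def IsWeakGenPolygon (n : ℕ) : Prop :=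
  G.incGraph.ediam = (n : ℕ∞) ∧ G.incGraph.egirth = ((2 * n : ℕ) : ℕ∞)

/-- Thick: every point is on at least 3 lines and every line carries at least 3 points. -/
def Thick : Prop :=
  (∀ p : G.P, ∃ l₁ l₂ l₃ : G.L, l₁ ≠ l₂ ∧ l₁ ≠ l₃ ∧ l₂ ≠ l₃ ∧ G.I p l₁ ∧ G.I p l₂ ∧ G.I p l₃) ∧
  (∀ l : G.L, ∃ p₁ p₂ p₃ : G.P, p₁ ≠ p₂ ∧ p₁ ≠ p₃ ∧ p₂ ≠ p₃ ∧ G.I p₁ l ∧ G.I p₂ l ∧ G.I p₃ l)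

/-- A (thick) generalized `n`-gon. -/
def IsGenPolygon (n : ℕ) : Prop := G.IsWeakGenPolygon n ∧ G.Thick

/-- The geometry has order `(u,v)`: every line has `u+1` points, every point is on `v+1` lines. -/
def HasOrder (u v : ℕ) : Prop :=
  (∀ l : G.L, {p : G.P | G.I p l}.ncard = u + 1) ∧
  (∀ p : G.P, {l : G.L | G.I p l}.ncard = v + 1)

/-- Two points are collinear if some line is incident with both. -/
def Collin (p q : G.P) : Prop := ∃ l, G.I p l ∧ G.I q l

/-- Generalized quadrangle axioms. -/
def IsGQ : Prop :=
  (∀ p q : G.P, p ≠ q → ∀ l m : G.L, G.I p l → G.I q l → G.I p m → G.I q m → l = m) ∧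
  (∀ (p : G.P) (l : G.L), ¬ G.I p l → ∃! q : G.P, G.I q l ∧ G.Collin p q)

end IncGeom

/-- A morphism of incidence geometries. -/
structure IncMor (G G' : IncGeom) where
  fP : G.P → G'.P
  fL : G.L → G'.L
  inc : ∀ p l, G.I p l → G'.I (fP p) (fL l)

/-- An epimorphism: surjective on points and on lines. -/
def IncMor.IsEpi {G G' : IncGeom} (α : IncMor G G') : Prop :=
  Function.Surjective α.fP ∧ Function.Surjective α.fL

namespace Aux

open SimpleGraph

lemma adj_isLeft {G : IncGeom} {x y : G.P ⊕ G.L} (h : G.incGraph.Adj x y) :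
    x.isLeft ≠ y.isLeft := by
  rcases h with ⟨p, l, rfl, rfl, _⟩ | ⟨p, l, rfl, rfl, _⟩ <;> simp

lemma walk_parity {G : IncGeom} {x y : G.P ⊕ G.L} (w : G.incGraph.Walk x y) :
    Even w.length ↔ (x.isLeft = y.isLeft) := by
  induction w with
  | nil => simp
  | @cons a b c h w ih =>
    have hab := adj_isLeft h
    rw [SimpleGraph.Walk.length_cons, Nat.even_add_one, ih]
    cases ha : a.isLeft <;> cases hb : b.isLeft <;> cases hc : c.isLeft <;> simp_all

lemma lines_meet {G : IncGeom} (hd : G.incGraph.ediam = ((3:ℕ) : ℕ∞)) {L W : G.L}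
    (hne : L ≠ W) : ∃ z, G.I z L ∧ G.I z W := by
  have h1 : G.incGraph.edist (Sum.inr L) (Sum.inr W) ≤ ((3:ℕ):ℕ∞) := hd ▸ edist_le_ediam
  have hnt : G.incGraph.edist (Sum.inr L) (Sum.inr W) ≠ ⊤ := by
    intro h; rw [h] at h1; exact (by simp : ¬ ((⊤:ℕ∞) ≤ ((3:ℕ):ℕ∞))) h1
  obtain ⟨w, hw⟩ := exists_walk_of_edist_ne_top hnt
  have hlen : (w.length : ℕ∞) ≤ ((3:ℕ):ℕ∞) := by rw [hw]; exact h1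
  have hlen3 : w.length ≤ 3 := by exact_mod_cast hlen
  have heven : Even w.length := by rw [walk_parity w]; rfl
  interval_cases h : w.length
  · exact absurd (Sum.inr.inj (w.eq_of_length_eq_zero h)) hne
  · simp [Nat.even_iff] at heven
  · -- length 2
    cases w with
    | nil => simp at h
    | cons h1 w' =>
      cases w' with
      | nil => simp at h
      | cons h2 w'' =>
        have h0 : w''.length = 0 := by simp only [SimpleGraph.Walk.length_cons] at h; omega
        have := w''.eq_of_length_eq_zero h0
        subst this
        rcases h1 with ⟨p, l, h1a, h1b, h1c⟩ | ⟨p, l, h1a, h1b, h1c⟩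
        · exact absurd h1a (by simp)
        · rcases h2 with ⟨q, m, h2a, h2b, h2c⟩ | ⟨q, m, h2a, h2b, h2c⟩
          · obtain rfl := Sum.inl.inj (h1b.symm.trans h2a)
            refine ⟨p, ?_, ?_⟩
            · obtain rfl := Sum.inr.inj h1a; exact h1c
            · obtain rfl := Sum.inr.inj h2b; exact h2c
          · exact absurd (h1b.symm.trans h2a) (by simp)
  · simp [Nat.even_iff] at heven

lemma no_digon {G : IncGeom} (hg : G.incGraph.egirth = ((6:ℕ) : ℕ∞)) {p q : G.P} {l m : G.L}
    (hpq : p ≠ q) (hlm : l ≠ m) (h1 : G.I p l) (h2 : G.I q l) (h3 : G.I p m) (h4 : G.I q m) :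
    False := by
  have a1 : G.incGraph.Adj (Sum.inl p) (Sum.inr l) := Or.inl ⟨p, l, rfl, rfl, h1⟩
  have a2 : G.incGraph.Adj (Sum.inr l) (Sum.inl q) := Or.inr ⟨q, l, rfl, rfl, h2⟩
  have a3 : G.incGraph.Adj (Sum.inl q) (Sum.inr m) := Or.inl ⟨q, m, rfl, rfl, h4⟩
  have a4 : G.incGraph.Adj (Sum.inr m) (Sum.inl p) := Or.inr ⟨p, m, rfl, rfl, h3⟩
  let c : G.incGraph.Walk (Sum.inl p) (Sum.inl p) :=
    .cons a1 (.cons a2 (.cons a3 (.cons a4 .nil)))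
  have hc : c.IsCycle := by
    rw [SimpleGraph.Walk.isCycle_def]
    refine ⟨?_, by simp [c], ?_⟩
    · rw [SimpleGraph.Walk.isTrail_def]
      simp [c, SimpleGraph.Walk.edges, hpq, hlm, Sym2.eq, Sym2.rel_iff]
      tauto
    · simp [c, SimpleGraph.Walk.support, hpq, hlm]
      tauto
  have h6 : ((6:ℕ):ℕ∞) ≤ (c.length : ℕ∞) := le_egirth.mp hg.ge _ c hc
  have : c.length = 4 := rfl
  rw [this] at h6
  exact absurd h6 (by decide)

lemma pair_other {α : Type*} {S : Set α} (h : S.ncard = 2) {c : α} (hc : c ∈ S) :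
    ∃ d, d ≠ c ∧ d ∈ S ∧ ∀ x ∈ S, x = c ∨ x = d := by
  obtain ⟨a, b, hab, rfl⟩ := Set.ncard_eq_two.mp h
  rcases hc with rfl | rfl
  · exact ⟨b, hab.symm, by simp, fun x hx => by rcases hx with rfl|rfl; exacts [Or.inl rfl, Or.inr rfl]⟩
  · exact ⟨a, hab, by simp, fun x hx => by rcases hx with rfl|rfl; exacts [Or.inr rfl, Or.inl rfl]⟩

end Aux

/-- An epimorphism from a thick projective plane onto the thin plane of order (1,1)
maps each point row onto the point row of the image line. -/
theorem stmt_1 (P Δ : IncGeom)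
    (hP : P.IsGenPolygon 3)
    (hΔ : Δ.IsWeakGenPolygon 3) (hΔord : Δ.HasOrder 1 1)
    (Φ : IncMor P Δ) (hepi : Φ.IsEpi) :
    ∀ L : P.L, Φ.fP '' {p : P.P | P.I p L} = {p' : Δ.P | Δ.I p' (Φ.fL L)} := by
  obtain ⟨⟨hPdiam, _⟩, _⟩ := hP
  obtain ⟨_, hΔgirth⟩ := hΔ
  obtain ⟨hΔl, hΔp⟩ := hΔord
  have hΔg6 : Δ.incGraph.egirth = ((6:ℕ) : ℕ∞) := by norm_num at hΔgirth ⊢; exact hΔgirth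
  intro L
  have key : ∀ c : Δ.P, Δ.I c (Φ.fL L) → ∃ p, P.I p L ∧ Φ.fP p = c := by
    intro c hc
    by_contra hcon
    push_neg at hcon
    obtain ⟨d, hdc, hd, hother⟩ := Aux.pair_other (hΔl (Φ.fL L)) hc
    have hall : ∀ p, P.I p L → Φ.fP p = d := by
      intro p hp
      rcases hother _ (Φ.inc p L hp) with h | h
      · exact absurd h (hcon p hp)
      · exact h
    obtain ⟨m', hm'ne, hm'c, _⟩ := Aux.pair_other (hΔp c) hc
    have hdm' : ¬ Δ.I d m' := fun hdm =>
      Aux.no_digon hΔg6 hdc.symm hm'ne.symm hc hd hm'c hdm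
    obtain ⟨W, hW⟩ := hepi.2 m'
    have hLW : L ≠ W := by rintro rfl; exact hm'ne (hW.symm ▸ rfl)
    obtain ⟨z, hzL, hzW⟩ := Aux.lines_meet hPdiam hLW
    have : Δ.I d m' := by
      have h1 := Φ.inc z W hzW
      rwa [hW, hall z hzL] at h1
    exact hdm' this
  ext p'
  simp only [Set.mem_image, Set.mem_setOf_eq]
  exact ⟨fun ⟨p, hp, he⟩ => he ▸ Φ.inc p L hp, key p'⟩
end

section
/- Let P be a finite projective plane of order n, and suppose the point set of P is partitioned into three nonempty sets A, B, C such that every line of P meets A in 0 or α points, meets B in 0 or β points, and meets C in 0 or γ points, where each of A, B, C meets some line and misses some line, and every line meets exactly two of the three sets. Then α = β = γ = (n+1)/2, and in particular n is odd. -/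
/-- A finite projective plane of order n. -/
structure FinProjPlane (n : ℕ) where
  P : Type
  L : Type
  I : P → L → Prop
  finP : Finite P
  finL : Finite L
  join : ∀ p q : P, p ≠ q → ∃! l : L, I p l ∧ I q l
  meet : ∀ l m : L, l ≠ m → ∃! p : P, I p l ∧ I p m
  line_card : ∀ l : L, {p : P | I p l}.ncard = n + 1
  point_card : ∀ p : P, {l : L | I p l}.ncard = n + 1

/-- If the points of a finite projective plane of order n are partitioned into three
nonempty sets A, B, C with constant nonzero line-intersection sizes α, β, γ, each set
meeting some line and missed by some line, and every line meets exactly two of the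
three sets, then α = β = γ = (n+1)/2 and n is odd. -/
theorem stmt_2 (n : ℕ) (Pl : FinProjPlane n) (A B C : Set Pl.P) (α β γ : ℕ)
    (hA : A.Nonempty) (hB : B.Nonempty) (hC : C.Nonempty)
    (hdisjAB : Disjoint A B) (hdisjAC : Disjoint A C) (hdisjBC : Disjoint B C)
    (hcover : A ∪ B ∪ C = Set.univ)
    (hα : ∀ l : Pl.L, ({p | Pl.I p l} ∩ A).ncard = 0 ∨ ({p | Pl.I p l} ∩ A).ncard = α)
    (hβ : ∀ l : Pl.L, ({p | Pl.I p l} ∩ B).ncard = 0 ∨ ({p | Pl.I p l} ∩ B).ncard = β)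
    (hγ : ∀ l : Pl.L, ({p | Pl.I p l} ∩ C).ncard = 0 ∨ ({p | Pl.I p l} ∩ C).ncard = γ)
    (hAm : (∃ l, ({p | Pl.I p l} ∩ A).Nonempty) ∧ ∃ l, {p | Pl.I p l} ∩ A = ∅)
    (hBm : (∃ l, ({p | Pl.I p l} ∩ B).Nonempty) ∧ ∃ l, {p | Pl.I p l} ∩ B = ∅)
    (hCm : (∃ l, ({p | Pl.I p l} ∩ C).Nonempty) ∧ ∃ l, {p | Pl.I p l} ∩ C = ∅)
    (htwo : ∀ l : Pl.L,
      (({p | Pl.I p l} ∩ A).Nonempty ∧ ({p | Pl.I p l} ∩ B).Nonempty ∧ {p | Pl.I p l} ∩ C = ∅) ∨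
      (({p | Pl.I p l} ∩ A).Nonempty ∧ ({p | Pl.I p l} ∩ C).Nonempty ∧ {p | Pl.I p l} ∩ B = ∅) ∨
      (({p | Pl.I p l} ∩ B).Nonempty ∧ ({p | Pl.I p l} ∩ C).Nonempty ∧ {p | Pl.I p l} ∩ A = ∅)) :
    α = β ∧ β = γ ∧ n + 1 = 2 * α ∧ Odd n := by
  haveI := Pl.finP
  -- every line's intersection counts with A, B, C sum to n+1
  have hsum : ∀ l : Pl.L, ({p | Pl.I p l} ∩ A).ncard + ({p | Pl.I p l} ∩ B).ncard
      + ({p | Pl.I p l} ∩ C).ncard = n + 1 := by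
    intro l
    have h1 : {p : Pl.P | Pl.I p l} =
        (({p | Pl.I p l} ∩ A) ∪ ({p | Pl.I p l} ∩ B)) ∪ ({p | Pl.I p l} ∩ C) := by
      rw [← Set.inter_union_distrib_left, ← Set.inter_union_distrib_left, hcover,
        Set.inter_univ]
    have d1 : Disjoint ({p | Pl.I p l} ∩ A) ({p | Pl.I p l} ∩ B) :=
      hdisjAB.mono Set.inter_subset_right Set.inter_subset_right
    have d2 : Disjoint (({p | Pl.I p l} ∩ A) ∪ ({p | Pl.I p l} ∩ B)) ({p | Pl.I p l} ∩ C) :=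
      Disjoint.union_left (hdisjAC.mono Set.inter_subset_right Set.inter_subset_right)
        (hdisjBC.mono Set.inter_subset_right Set.inter_subset_right)
    have := Pl.line_card l
    rw [h1, Set.ncard_union_eq d2 (Set.toFinite _) (Set.toFinite _),
      Set.ncard_union_eq d1 (Set.toFinite _) (Set.toFinite _)] at this
    exact this
  have getcard : ∀ (l : Pl.L) (S : Set Pl.P) (k : ℕ),
      (({p | Pl.I p l} ∩ S).ncard = 0 ∨ ({p | Pl.I p l} ∩ S).ncard = k) →
      ({p | Pl.I p l} ∩ S).Nonempty → ({p | Pl.I p l} ∩ S).ncard = k := by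
    intro l S k h hne
    rcases h with h | h
    · exact absurd h (by simpa using (Set.nonempty_iff_ne_empty.mp hne ∘
        (Set.ncard_eq_zero (Set.toFinite _)).mp))
    · exact h
  -- a line missing A gives β + γ = n+1
  have hBC : β + γ = n + 1 := by
    obtain ⟨l, hl⟩ := hAm.2
    rcases htwo l with ⟨hA', _, _⟩ | ⟨hA', _, _⟩ | ⟨hB', hC', _⟩
    · exact absurd hl (Set.nonempty_iff_ne_empty.mp hA')
    · exact absurd hl (Set.nonempty_iff_ne_empty.mp hA')
    · have := hsum l
      rw [getcard l B β (hβ l) hB', getcard l C γ (hγ l) hC', hl, Set.ncard_empty] at this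
      omega
  have hAC : α + γ = n + 1 := by
    obtain ⟨l, hl⟩ := hBm.2
    rcases htwo l with ⟨_, hB', _⟩ | ⟨hA', hC', _⟩ | ⟨hB', _, _⟩
    · exact absurd hl (Set.nonempty_iff_ne_empty.mp hB')
    · have := hsum l
      rw [getcard l A α (hα l) hA', getcard l C γ (hγ l) hC', hl, Set.ncard_empty] at this
      omega
    · exact absurd hl (Set.nonempty_iff_ne_empty.mp hB')
  have hAB : α + β = n + 1 := by
    obtain ⟨l, hl⟩ := hCm.2
    rcases htwo l with ⟨hA', hB', _⟩ | ⟨_, hC', _⟩ | ⟨_, hC', _⟩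
    · have := hsum l
      rw [getcard l A α (hα l) hA', getcard l B β (hβ l) hB', hl, Set.ncard_empty] at this
      omega
    · exact absurd hl (Set.nonempty_iff_ne_empty.mp hC')
    · exact absurd hl (Set.nonempty_iff_ne_empty.mp hC')
  refine ⟨by omega, by omega, by omega, ⟨α - 1, by omega⟩⟩
end

section
/- Let P be a finite projective plane of order n, let A be a nonempty set of points such that every line of P meets A in exactly 0 or exactly α points, with α ≥ 1. Then |A| = (n+1)(α−1) + 1. Moreover, if there exists a point not in A, then α divides |A|, and hence α divides n(α−1), i.e. α divides n. -/
/-- Counting a point set met by every line in 0 or α points in a finite projective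
plane of order n. -/
theorem stmt_3 (n : ℕ) (Pl : FinProjPlane n) (A : Set Pl.P) (α : ℕ)
    (hA : A.Nonempty) (hα : 1 ≤ α)
    (hconst : ∀ l : Pl.L, ({p | Pl.I p l} ∩ A).ncard = 0 ∨ ({p | Pl.I p l} ∩ A).ncard = α) :
    A.ncard = (n + 1) * (α - 1) + 1 ∧
      ((∃ p : Pl.P, p ∉ A) → α ∣ A.ncard ∧ α ∣ n) := by
  classical
  haveI := Pl.finP
  haveI := Pl.finL
  haveI : Fintype Pl.P := Fintype.ofFinite _
  haveI : Fintype Pl.L := Fintype.ofFinite _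
  haveI hneL : Nonempty Pl.L := by
    obtain ⟨a, _⟩ := hA
    have h := Pl.point_card a
    have : {l | Pl.I a l}.Nonempty := by
      apply Set.nonempty_of_ncard_ne_zero; omega
    exact ⟨this.choose⟩
  -- key fiberwise counting lemma
  have key : ∀ x : Pl.P,
      (A \ {x}).toFinset.card =
        ∑ l ∈ {l : Pl.L | Pl.I x l}.toFinset,
          (({p | Pl.I p l} ∩ A) \ {x}).toFinset.card := by
    intro x
    set f : Pl.P → Pl.L := fun p =>
      if h : p ≠ x then (Pl.join p x h).choose else Classical.arbitrary _ with hf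
    have hmem : ∀ p ∈ (A \ {x}).toFinset, f p ∈ {l : Pl.L | Pl.I x l}.toFinset := by
      intro p hp
      simp only [Set.mem_toFinset, Set.mem_diff, Set.mem_singleton_iff] at hp
      have hpx : p ≠ x := hp.2
      simp only [hf, dif_pos hpx, Set.mem_toFinset, Set.mem_setOf_eq]
      exact (Pl.join p x hpx).choose_spec.1.2
    have := Finset.card_eq_sum_card_fiberwise hmem
    rw [this]
    apply Finset.sum_congr rfl
    intro l hl
    simp only [Set.mem_toFinset, Set.mem_setOf_eq] at hl
    congr 1
    ext p
    simp only [Finset.mem_filter, Set.mem_toFinset, Set.mem_diff, Set.mem_singleton_iff,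
      Set.mem_inter_iff, Set.mem_setOf_eq]
    constructor
    · rintro ⟨⟨hpA, hpx⟩, hfp⟩
      have : Pl.I p (f p) := by
        simp only [hf, dif_pos hpx]
        exact (Pl.join p x hpx).choose_spec.1.1
      rw [hfp] at this
      exact ⟨⟨this, hpA⟩, hpx⟩
    · rintro ⟨⟨hpl, hpA⟩, hpx⟩
      refine ⟨⟨hpA, hpx⟩, ?_⟩
      simp only [hf, dif_pos hpx]
      exact ((Pl.join p x hpx).choose_spec.2 l ⟨hpl, hl⟩).symm
  have hfinA : A.Finite := A.toFinite
  -- part 1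
  obtain ⟨a, ha⟩ := hA
  have h1 : A.ncard = (n + 1) * (α - 1) + 1 := by
    have hk := key a
    have hterm : ∀ l ∈ {l : Pl.L | Pl.I a l}.toFinset,
        (({p | Pl.I p l} ∩ A) \ {a}).toFinset.card = α - 1 := by
      intro l hl
      simp only [Set.mem_toFinset, Set.mem_setOf_eq] at hl
      have haI : a ∈ {p | Pl.I p l} ∩ A := ⟨hl, ha⟩
      have hcard : ({p | Pl.I p l} ∩ A).ncard = α := by
        rcases hconst l with h | h
        · exfalso
          have : ({p | Pl.I p l} ∩ A).Nonempty := ⟨a, haI⟩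
          rw [Set.ncard_eq_zero (Set.toFinite _)] at h
          simp [h] at this
        · exact h
      rw [← Set.ncard_eq_toFinset_card', Set.ncard_diff_singleton_of_mem haI, hcard]
    rw [Finset.sum_congr rfl hterm, Finset.sum_const, smul_eq_mul] at hk
    have hlines : {l : Pl.L | Pl.I a l}.toFinset.card = n + 1 := by
      rw [← Set.ncard_eq_toFinset_card']; exact Pl.point_card a
    rw [hlines] at hk
    have hAd : (A \ {a}).ncard + 1 = A.ncard := Set.ncard_diff_singleton_add_one ha
    rw [← hAd, Set.ncard_eq_toFinset_card', hk]
  refine ⟨h1, ?_⟩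
  rintro ⟨b, hb⟩
  have hk := key b
  have hdiff : A \ {b} = A := Set.diff_singleton_eq_self hb
  have hterm : ∀ l ∈ {l : Pl.L | Pl.I b l}.toFinset,
      (({p | Pl.I p l} ∩ A) \ {b}).toFinset.card = ({p | Pl.I p l} ∩ A).ncard := by
    intro l _
    have heq : ({p | Pl.I p l} ∩ A) \ {b} = {p | Pl.I p l} ∩ A :=
      Set.diff_singleton_eq_self (fun h => hb h.2)
    rw [← Set.ncard_eq_toFinset_card', heq]
  have hk2 : A.ncard = ∑ l ∈ {l : Pl.L | Pl.I b l}.toFinset, ({p | Pl.I p l} ∩ A).ncard := by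
    calc A.ncard = (A \ {b}).ncard := by rw [hdiff]
    _ = (A \ {b}).toFinset.card := Set.ncard_eq_toFinset_card' _
    _ = _ := by rw [hk]; exact Finset.sum_congr rfl hterm
  have hdvdA : α ∣ A.ncard := by
    rw [hk2]
    apply Finset.dvd_sum
    intro l _
    rcases hconst l with h | h <;> rw [h] <;> simp
  refine ⟨hdvdA, ?_⟩
  have heq : A.ncard + n = α * (n + 1) := by
    obtain ⟨β, rfl⟩ : ∃ β, α = β + 1 := ⟨α - 1, by omega⟩
    rw [h1, Nat.add_sub_cancel]; ring
  have : α ∣ A.ncard + n := by rw [heq]; exact dvd_mul_right _ _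
  exact (Nat.dvd_add_right hdvdA).mp this
end

section
/- There is no finite projective plane of order n admitting a partition of its points into nonempty sets A, B, C such that every line meets A in 0 or (n+1)/2 points, meets B in 0 or (n+1)/2 points, and meets C in 0 or (n+1)/2 points. (Equivalently: with α = (n+1)/2, one has |A| = (n²+1)/2, but counting lines through a point outside A forces (n+1)/2 to divide |A|, which is impossible.) -/
lemma count_through (n : ℕ) (Pl : FinProjPlane n) (S : Set Pl.P) (q : Pl.P) (hq : q ∉ S) :
    haveI := Pl.finP; haveI := Pl.finL
    S.ncard = ∑ l ∈ (Set.toFinite {l | Pl.I q l}).toFinset, ({p | Pl.I p l} ∩ S).ncard := by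
  haveI := Pl.finP; haveI := Pl.finL
  classical
  have hset : (Set.toFinite S).toFinset = (Set.toFinite {l | Pl.I q l}).toFinset.biUnion
      (fun l => (Set.toFinite ({p | Pl.I p l} ∩ S)).toFinset) := by
    ext p
    simp only [Set.Finite.mem_toFinset, Finset.mem_biUnion, Set.mem_inter_iff, Set.mem_setOf_eq]
    constructor
    · intro hp
      have hne : p ≠ q := fun h => hq (h ▸ hp)
      obtain ⟨l, ⟨hpl, hql⟩, -⟩ := Pl.join p q hne
      exact ⟨l, hql, hpl, hp⟩
    · rintro ⟨l, -, -, hp⟩; exact hp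
  have hdisj : ∀ l ∈ (Set.toFinite {l | Pl.I q l}).toFinset,
      ∀ m ∈ (Set.toFinite {l | Pl.I q l}).toFinset, l ≠ m →
      Disjoint ((Set.toFinite ({p | Pl.I p l} ∩ S)).toFinset)
        ((Set.toFinite ({p | Pl.I p m} ∩ S)).toFinset) := by
    intro l hl m hm hlm
    rw [Finset.disjoint_left]
    intro p hpl hpm
    simp only [Set.Finite.mem_toFinset, Set.mem_inter_iff, Set.mem_setOf_eq] at hpl hpm hl hm
    obtain ⟨r, -, hr⟩ := Pl.meet l m hlm
    have h1 : p = r := hr p ⟨hpl.1, hpm.1⟩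
    have h2 : q = r := hr q ⟨hl, hm⟩
    exact hq ((h1.trans h2.symm) ▸ hpl.2)
  rw [Set.ncard_eq_toFinset_card S (Set.toFinite S), hset, Finset.card_biUnion hdisj]
  exact Finset.sum_congr rfl fun l _ => (Set.ncard_eq_toFinset_card _ _).symm

/-- No finite projective plane of order n admits a partition of its points into three
nonempty sets each met by every line in 0 or (n+1)/2 points. -/
theorem stmt_4 (n : ℕ) (hn : 2 ≤ n) (Pl : FinProjPlane n) (A B C : Set Pl.P) (α : ℕ)
    (hhalf : 2 * α = n + 1)
    (hA : A.Nonempty) (hB : B.Nonempty) (hC : C.Nonempty)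
    (hdisjAB : Disjoint A B) (hdisjAC : Disjoint A C) (hdisjBC : Disjoint B C)
    (hcover : A ∪ B ∪ C = Set.univ)
    (hαA : ∀ l : Pl.L, ({p | Pl.I p l} ∩ A).ncard = 0 ∨ ({p | Pl.I p l} ∩ A).ncard = α)
    (hαB : ∀ l : Pl.L, ({p | Pl.I p l} ∩ B).ncard = 0 ∨ ({p | Pl.I p l} ∩ B).ncard = α)
    (hαC : ∀ l : Pl.L, ({p | Pl.I p l} ∩ C).ncard = 0 ∨ ({p | Pl.I p l} ∩ C).ncard = α) :
    False := by
  classical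
  haveI := Pl.finP; haveI := Pl.finL
  obtain ⟨a, ha⟩ := hA
  obtain ⟨b, hb⟩ := hB
  have hbA : b ∉ A := fun h => (hdisjAB.le_bot ⟨h, hb⟩)
  have hα1 : 1 ≤ α := by omega
  have hline : ∀ l : Pl.L, Pl.I a l → ({p | Pl.I p l} ∩ A).ncard = α := by
    intro l hal
    rcases hαA l with h0 | h; swap; · exact h
    exfalso
    have := (Set.ncard_eq_zero (Set.toFinite _)).mp h0
    exact absurd this (Set.nonempty_iff_ne_empty.mp ⟨a, hal, ha⟩)
  have hcountA : (A \ {a}).ncard = (n + 1) * (α - 1) := by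
    rw [count_through n Pl (A \ {a}) a (by simp)]
    have hterm : ∀ l ∈ (Set.toFinite {l | Pl.I a l}).toFinset,
        ({p | Pl.I p l} ∩ (A \ {a})).ncard = α - 1 := by
      intro l hl
      simp only [Set.Finite.mem_toFinset, Set.mem_setOf_eq] at hl
      have heq : {p | Pl.I p l} ∩ (A \ {a}) = ({p | Pl.I p l} ∩ A) \ {a} := by
        ext p; simp [Set.mem_diff]; tauto
      rw [heq, Set.ncard_diff_singleton_of_mem (s := {p | Pl.I p l} ∩ A) ⟨hl, ha⟩,
        hline l hl]
    rw [Finset.sum_congr rfl hterm, Finset.sum_const, smul_eq_mul]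
    congr 1
    have := Pl.point_card a
    rwa [Set.ncard_eq_toFinset_card _ (Set.toFinite _)] at this
  have hAcard : A.ncard = (n + 1) * (α - 1) + 1 := by
    have := Set.ncard_diff_singleton_add_one ha (Set.toFinite A)
    omega
  have hdvd : α ∣ A.ncard := by
    rw [count_through n Pl A b hbA]
    apply Finset.dvd_sum
    intro l _
    rcases hαA l with h | h <;> rw [h] <;> simp
  rw [hAcard] at hdvd
  have hone : α ∣ 1 := by
    have h2 : (n + 1) * (α - 1) = α * (2 * (α - 1)) := by
      rw [← hhalf]; ring
    exact (Nat.dvd_add_right (h2 ▸ Dvd.intro _ rfl)).mp hdvd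
  have := Nat.dvd_one.mp hone
  omega
end

section
/- Every thick locally finitely chained generalized n-gon is locally finitely generated. -/
namespace IncGeom

/-- The restriction of a geometry to subsets of points and lines. -/
def restrict (G : IncGeom) (Ps : Set G.P) (Ls : Set G.L) : IncGeom where
  P := Ps
  L := Ls
  I := fun p l => G.I p.1 l.1

/-- `(Ps, Ls)` carries a sub-n-gon of `G` (possibly thin). -/
def IsSubPolygon (G : IncGeom) (n : ℕ) (Ps : Set G.P) (Ls : Set G.L) : Prop :=
  (G.restrict Ps Ls).IsWeakGenPolygon n

/-- Points of the subgeometry generated by a point set S: the intersection of all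
sub-n-gons containing S. -/
def genP (G : IncGeom) (n : ℕ) (S : Set G.P) : Set G.P :=
  {p | ∀ Ps Ls, G.IsSubPolygon n Ps Ls → S ⊆ Ps → p ∈ Ps}

/-- Lines of the subgeometry generated by a point set S. -/
def genL (G : IncGeom) (n : ℕ) (S : Set G.P) : Set G.L :=
  {l | ∀ Ps Ls, G.IsSubPolygon n Ps Ls → S ⊆ Ps → l ∈ Ls}

/-- Locally finitely generated: every finite point set generating a sub-n-gon
generates a finite one. -/
def LocFinGenerated (G : IncGeom) (n : ℕ) : Prop :=
  ∀ S : Set G.P, S.Finite → G.IsSubPolygon n (G.genP n S) (G.genL n S) →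
    (G.genP n S).Finite ∧ (G.genL n S).Finite

/-- Locally finitely chained: an increasing chain of finite point sets, each
generating a finite sub-n-gon, whose generated sub-n-gons exhaust G. -/
def LocFinChained (G : IncGeom) (n : ℕ) : Prop :=
  ∃ S : ℕ → Set G.P, Monotone S ∧ (∀ i, (S i).Finite) ∧
    (∀ i, G.IsSubPolygon n (G.genP n (S i)) (G.genL n (S i)) ∧
      (G.genP n (S i)).Finite ∧ (G.genL n (S i)).Finite) ∧
    (⋃ i, G.genP n (S i)) = Set.univ ∧ (⋃ i, G.genL n (S i)) = Set.univ

end IncGeom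

/-- Every thick locally finitely chained generalized n-gon is locally finitely
generated. -/
theorem stmt_11 (n : ℕ) (G : IncGeom) (hG : G.IsGenPolygon n)
    (hchain : G.LocFinChained n) : G.LocFinGenerated n := by
  obtain ⟨T, hmono, _hTfin, hsub, hUP, _hUL⟩ := hchain
  intro S hS _
  -- genP of the chain is monotone
  have hmonoGen : Monotone (fun i => G.genP n (T i)) := by
    intro i j hij p hp Ps Ls hPoly hTj
    exact hp Ps Ls hPoly ((hmono hij).trans hTj)
  -- each point of S lies in some genP n (T i)
  have hmem : ∀ p ∈ S, ∃ i, p ∈ G.genP n (T i) := by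
    intro p _
    have : p ∈ ⋃ i, G.genP n (T i) := by rw [hUP]; trivial
    simpa using this
  choose f hf using hmem
  -- take the max index over the finite set S
  obtain ⟨i, hi⟩ : ∃ i, S ⊆ G.genP n (T i) := by
    rcases hS.exists_finset_coe with ⟨s, rfl⟩
    refine ⟨s.attach.sup (fun p => f p.1 (Finset.mem_coe.mpr p.2)), fun p hp => ?_⟩
    have hle : f p hp ≤ s.attach.sup (fun p => f p.1 (Finset.mem_coe.mpr p.2)) :=
      Finset.le_sup (f := fun p => f p.1 (Finset.mem_coe.mpr p.2))
        (Finset.mem_attach s ⟨p, Finset.mem_coe.mp hp⟩)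
    exact hmonoGen hle (hf p hp)
  constructor
  · exact (hsub i).2.1.subset fun p hp => hp _ _ (hsub i).1 hi
  · exact (hsub i).2.2.subset fun l hl => hl _ _ (hsub i).1 hi
end

section
/- Let Γ be an infinite thick locally finitely chained generalized n-gon. Then n ∈ {3, 4, 6, 8}. -/
open SimpleGraph

namespace StmtAux

variable {V : Type*} {G : SimpleGraph V}

lemma egirth_le_cycle {a : V} {c : G.Walk a a} (hc : c.IsCycle) :
    G.egirth ≤ c.length :=
  (SimpleGraph.le_egirth.mp le_rfl) a c hc

/-- prefix of a path of any length k ≤ length -/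
lemma exists_path_prefix {x y : V} (d : G.Walk x y) (hd : d.IsPath) (k : ℕ)
    (hk : k ≤ d.length) :
    ∃ (z : V) (r : G.Walk x z), r.IsPath ∧ r.length = k ∧ ∀ a ∈ r.support, a ∈ d.support := by
  induction d generalizing k with
  | nil =>
    have : k = 0 := by simpa using hk
    subst this
    exact ⟨_, Walk.nil, by simp, by simp, by simp⟩
  | @cons u a v h p ih =>
    rcases k with _ | k
    · exact ⟨u, Walk.nil, by simp, by simp, by simp⟩
    · rw [Walk.cons_isPath_iff] at hd
      obtain ⟨z, r, hr1, hr2, hr3⟩ := ih hd.1 k (by simpa using hk)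
      refine ⟨z, Walk.cons h r, ?_, by simp [hr2], ?_⟩
      · rw [Walk.cons_isPath_iff]
        exact ⟨hr1, fun hu => hd.2 (hr3 _ hu)⟩
      · intro b hb
        rw [Walk.support_cons, List.mem_cons] at hb
        rcases hb with rfl | hb
        · simp
        · simp [hr3 _ hb]

/-- appending paths whose supports meet only at the junction gives a path -/
lemma isPath_append_of {u v w : V} {p : G.Walk u v} {q : G.Walk v w}
    (hp : p.IsPath) (hq : q.IsPath)
    (hint : ∀ y, y ∈ p.support → y ∈ q.support → y = v) :
    (p.append q).IsPath := by
  induction p with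
  | nil => simpa using hq
  | @cons a b v h p ih =>
    rw [Walk.cons_isPath_iff] at hp
    rw [Walk.cons_append, Walk.cons_isPath_iff]
    refine ⟨ih hp.1 hq (fun y hy hy' => hint y (by simp [hy]) hy'), ?_⟩
    intro hmem
    rw [Walk.mem_support_append_iff] at hmem
    rcases hmem with hmem | hmem
    · exact hp.2 hmem
    · have hav : a = v := hint a (by simp) hmem
      subst hav
      exact hp.2 (Walk.end_mem_support p)

/-- a vertex in the support of a walk is within `dist ≤ length` of the start -/
lemma dist_le_of_mem_support {u v y : V} {p : G.Walk u v} (hy : y ∈ p.support) :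
    G.dist u y ≤ p.length := by
  classical
  exact le_trans (SimpleGraph.dist_le _) (Walk.length_takeUntil_le p hy)



/-- first vertex along a walk belonging to a set -/
lemma exists_first_in_set {a v : V} (r : G.Walk a v) (S : Set V) (hv : v ∈ S) :
    ∃ (x : V) (r1 : G.Walk a x), x ∈ S ∧ r1.length ≤ r.length ∧
      (∀ y ∈ r1.support, y ∈ r.support) ∧ (r.IsPath → r1.IsPath) ∧
      (∀ y ∈ r1.support, y ∈ S → y = x) := by
  induction r with
  | @nil u =>
    exact ⟨u, Walk.nil, hv, le_refl _, by simp, fun h => h, by simp⟩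
  | @cons u b w h p ih =>
    by_cases hu : u ∈ S
    · exact ⟨u, Walk.nil, hu, by simp, by simp, by simp, by simp⟩
    · obtain ⟨x, r1, hx, hlen, hsub, hpath, hfirst⟩ := ih hv
      refine ⟨x, Walk.cons h r1, hx, by simpa using hlen, ?_, ?_, ?_⟩
      · intro y hy
        rw [Walk.support_cons, List.mem_cons] at hy
        rcases hy with rfl | hy
        · simp
        · simp [hsub _ hy]
      · intro hP
        rw [Walk.cons_isPath_iff] at hP ⊢
        exact ⟨hpath hP.1, fun hmem => hP.2 (hsub _ hmem)⟩
      · intro y hy hyS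
        rw [Walk.support_cons, List.mem_cons] at hy
        rcases hy with rfl | hy
        · exact absurd hyS hu
        · exact hfirst _ hy hyS

/-- two distinct paths between the same endpoints give a girth bound -/
lemma egirth_le_of_two_paths : ∀ {u v : V} (p q : G.Walk u v), p.IsPath → q.IsPath →
    p ≠ q → G.egirth ≤ (p.length + q.length : ℕ)
  | u, v, p, q, hp, hq, hne => by
    classical
    induction p with
    | nil =>
      exact absurd (Walk.isPath_iff_eq_nil.mp hq).symm hne
    | @cons u a v h p' ihp =>
      cases q with
      | nil =>
        rw [Walk.cons_isPath_iff] at hp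
        exact absurd (Walk.end_mem_support p') hp.2
      | @cons _ b _ h' q' =>
        rw [Walk.cons_isPath_iff] at hp hq
        by_cases hab : a = b
        · subst hab
          have hne' : p' ≠ q' := fun hh => hne (by rw [hh])
          have := ihp q' hp.1 hq.1 hne'
          refine le_trans this (Nat.cast_le.mpr ?_)
          simp only [Walk.length_cons]
          omega
        · -- first vertex of p' lying in q's support
          obtain ⟨x, r1, hxS, hlen, _hsub, hpathr, hfirst⟩ :=
            exists_first_in_set p' {y | y ∈ (Walk.cons h' q').support}
              (by simp [Walk.end_mem_support])
          have hr1 : r1.IsPath := hpathr hp.1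
          have hxp' : x ∈ p'.support := _hsub _ (Walk.end_mem_support r1)
          have hxu : x ≠ u := fun hh => hp.2 (hh ▸ hxp')
          have hxq : x ∈ q'.support := by
            have hx2 : x ∈ (Walk.cons h' q').support := hxS
            rw [Walk.support_cons, List.mem_cons] at hx2
            rcases hx2 with rfl | hx2
            · exact absurd rfl hxu
            · exact hx2
          set s : G.Walk b x := q'.takeUntil x hxq with hs
          have hspath : s.IsPath := hq.1.takeUntil _
          have hslen : s.length ≤ q'.length := Walk.length_takeUntil_le _ _
          have hssub : ∀ y ∈ s.support, y ∈ q'.support := fun y hy =>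
            Walk.support_takeUntil_subset _ _ hy
          have hcs : (Walk.cons h' s).IsPath := by
            rw [Walk.cons_isPath_iff]
            exact ⟨hspath, fun hmem => hq.2 (hssub _ hmem)⟩
          have hcyc : (Walk.cons h (r1.append (Walk.cons h' s).reverse)).IsCycle := by
            rw [Walk.cons_isCycle_iff]
            constructor
            · refine isPath_append_of hr1 ((Walk.isPath_reverse_iff _).mpr hcs) ?_
              intro y hy hy'
              have hyS : y ∈ (Walk.cons h' q').support := by
                rw [Walk.support_reverse, List.mem_reverse] at hy'
                rw [Walk.support_cons, List.mem_cons] at hy' ⊢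
                rcases hy' with rfl | hy'
                · exact Or.inl rfl
                · exact Or.inr (hssub _ hy')
              exact hfirst _ hy hyS
            · intro hmem
              rw [Walk.edges_append, List.mem_append] at hmem
              rcases hmem with hmem | hmem
              · have := Walk.fst_mem_support_of_mem_edges r1 hmem
                exact hp.2 (_hsub _ this)
              · rw [Walk.edges_reverse, List.mem_reverse, Walk.edges_cons,
                  List.mem_cons] at hmem
                rcases hmem with hmem | hmem
                · rw [Sym2.eq_iff] at hmem
                  rcases hmem with ⟨-, hab'⟩ | ⟨hub, hau⟩
                  · exact hab hab'
                  · exact (G.loopless.irrefl u (hau ▸ h)).elim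
                · have := Walk.fst_mem_support_of_mem_edges s hmem
                  exact hq.2 (hssub _ this)
          have hgl := egirth_le_cycle hcyc
          refine le_trans hgl (Nat.cast_le.mpr ?_)
          simp only [Walk.length_cons, Walk.length_append, Walk.length_reverse]
          omega


lemma length_rotate {a u : V} {c : G.Walk a a} (h : u ∈ c.support) [DecidableEq V] :
    (c.rotate u h).length = c.length := by
  have hts := Walk.take_spec c h
  have h1 : (c.takeUntil u h).length + (c.dropUntil u h).length = c.length := by
    rw [← Walk.length_append, hts]
  rw [Walk.rotate, Walk.length_append]
  omega

lemma mem_support_rotate {a u y : V} {c : G.Walk a a} (h : u ∈ c.support) [DecidableEq V]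
    (hy : y ∈ (c.rotate u h).support) : y ∈ c.support := by
  rw [Walk.support_eq_cons] at hy
  rcases List.mem_cons.mp hy with rfl | hy
  · exact h
  · have := (Walk.support_rotate c u h).mem_iff.mp hy
    exact List.mem_of_mem_tail this

/-- prefix decomposition of a walk -/
lemma exists_prefix_decomp {x y : V} (d : G.Walk x y) (k : ℕ) (hk : k ≤ d.length) :
    ∃ (z : V) (r : G.Walk x z) (d2 : G.Walk z y),
      d = r.append d2 ∧ r.length = k := by
  induction d generalizing k with
  | nil =>
    have : k = 0 := by simpa using hk
    subst this
    exact ⟨_, Walk.nil, Walk.nil, rfl, rfl⟩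
  | @cons u a v h p ih =>
    rcases k with _ | k
    · exact ⟨_, Walk.nil, Walk.cons h p, rfl, rfl⟩
    · obtain ⟨z, r, d2, hdec, hlen⟩ := ih k (by simpa using hk)
      exact ⟨z, Walk.cons h r, d2, by rw [Walk.cons_append, ← hdec], by simp [hlen]⟩

/-- a prefix of a path is a path, and the endpoint of a proper prefix avoids repeats -/
lemma prefix_isPath {x y z : V} {r : G.Walk x z} {d2 : G.Walk z y} {d : G.Walk x y}
    (hd : d.IsPath) (hdec : d = r.append d2) : r.IsPath := by
  subst hdec
  induction r with
  | nil => simp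
  | @cons u a w h p ih =>
    rw [Walk.cons_append, Walk.cons_isPath_iff] at hd
    rw [Walk.cons_isPath_iff]
    refine ⟨ih hd.1, fun hmem => hd.2 ?_⟩
    rw [Walk.mem_support_append_iff]
    exact Or.inl hmem

/-- min degree 2 in a graph of diameter ≤ n and girth 2n -/
lemma two_neighbors {n : ℕ} (hn : 2 ≤ n) (hreach : ∀ u v : V, G.Reachable u v)
    (hdist : ∀ u v : V, G.dist u v ≤ n) (hgirth : G.egirth = ((2 * n : ℕ) : ℕ∞)) (v : V) :
    ∃ w w' : V, G.Adj v w ∧ G.Adj v w' ∧ w ≠ w' := by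
  classical
  have h2p : ∀ {u w : V} (p q : G.Walk u w), p.IsPath → q.IsPath → p ≠ q →
      2 * n ≤ p.length + q.length := by
    intro u w p q hp hq hne
    have := egirth_le_of_two_paths p q hp hq hne
    rw [hgirth] at this
    exact_mod_cast this
  have hnac : ¬ G.IsAcyclic := by
    rw [← SimpleGraph.egirth_eq_top, hgirth]
    exact ENat.coe_ne_top _
  obtain ⟨a, c, hc, hclen'⟩ := exists_egirth_eq_length.mpr hnac
  rw [hgirth] at hclen'
  have hclen : c.length = 2 * n := by exact_mod_cast hclen'.symm
  by_cases hv : v ∈ c.support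
  · -- v on the cycle: two cycle-neighbors
    obtain ⟨c', hc', hlen'⟩ : ∃ c' : G.Walk v v, c'.IsCycle ∧ c'.length = 2 * n :=
      ⟨c.rotate v hv, hc.rotate hv, by rw [length_rotate hv, hclen]⟩
    cases c' with
    | nil => exact absurd hc' (Walk.IsCycle.not_of_nil)
    | @cons _ b _ hadj d =>
      rw [Walk.cons_isCycle_iff] at hc'
      have hdlen : d.length = 2 * n - 1 := by
        simp only [Walk.length_cons] at hlen'; omega
      have hdp : d.IsPath := hc'.1
      have hdrp : d.reverse.IsPath := hdp.reverse
      have hvb : v ≠ b := hadj.ne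
      cases hdr : d.reverse with
      | nil =>
        have h0 : d.reverse.length = 0 := by rw [hdr]; rfl
        rw [Walk.length_reverse] at h0
        omega
      | @cons _ w _ h' e =>
        refine ⟨b, w, hadj, h', ?_⟩
        rintro rfl
        rw [hdr, Walk.cons_isPath_iff] at hdrp
        have : e = Walk.nil := Walk.isPath_iff_eq_nil.mp hdrp.1
        have : d.reverse.length = 1 := by rw [hdr, this]; simp
        rw [Walk.length_reverse] at this
        omega
  · -- v off the cycle
    have hva : v ≠ a := fun hh => hv (hh ▸ c.start_mem_support)
    -- v has a neighbor
    obtain ⟨P, hPp, hPlen⟩ := (hreach v a).exists_path_of_dist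
    obtain ⟨w0, hw0⟩ : ∃ w0, G.Adj v w0 := by
      cases P with
      | nil => exact absurd rfl hva
      | cons h _ => exact ⟨_, h⟩
    by_contra hcon
    push_neg at hcon
    have huniq : ∀ w w' : V, G.Adj v w → G.Adj v w' → w = w' := by
      intro w w' h1 h2
      by_contra hne
      exact hne (hcon w w' h1 h2)
    -- eccentricity of w0 at most n-1
    have hK : ∀ x : V, G.dist w0 x ≤ n - 1 := by
      intro x
      by_cases hx : x = v
      · rw [hx]
        have : G.dist w0 v ≤ 1 := by
          refine le_trans (SimpleGraph.dist_le (Walk.cons hw0.symm Walk.nil)) ?_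
          simp
        omega
      · obtain ⟨Q, hQp, hQlen⟩ := (hreach v x).exists_path_of_dist
        have hQpos : 0 < Q.length := by
          rcases Nat.eq_zero_or_pos Q.length with h0 | h0
          · exact absurd (Walk.eq_of_length_eq_zero h0) (Ne.symm hx)
          · exact h0
        cases Q with
        | nil => simp at hQpos
        | @cons _ y _ hy rest =>
          have hyw0 : y = w0 := huniq y w0 hy hw0
          have : G.dist w0 x ≤ rest.length := hyw0 ▸ SimpleGraph.dist_le rest
          have hrl : rest.length + 1 = G.dist v x := by
            simpa [Nat.add_comm] using hQlen
          have := hdist v x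
          omega
    -- choose c0 on the cycle minimizing dist from w0
    have hAne : ∃ k, ∃ y ∈ c.support, G.dist w0 y = k := ⟨_, a, c.start_mem_support, rfl⟩
    obtain ⟨c0, hc0mem, hc0d⟩ := Nat.sInf_mem hAne
    set t := G.dist w0 c0 with ht
    have hmin : ∀ y ∈ c.support, t ≤ G.dist w0 y := by
      intro y hy
      rw [hc0d]
      exact Nat.sInf_le ⟨y, hy, rfl⟩
    have htn : t ≤ n - 1 := hK c0
    -- rotate the cycle at c0
    obtain ⟨c', hc', hlen', hcsub⟩ : ∃ c' : G.Walk c0 c0, c'.IsCycle ∧ c'.length = 2 * n ∧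
        ∀ y ∈ c'.support, y ∈ c.support :=
      ⟨c.rotate c0 hc0mem, hc.rotate hc0mem, by rw [length_rotate hc0mem, hclen],
        fun y hy => mem_support_rotate hc0mem hy⟩
    cases c' with
    | nil => exact absurd hc' (Walk.IsCycle.not_of_nil)
    | @cons _ b _ hadj d =>
      rw [Walk.cons_isCycle_iff] at hc'
      have hdlen : d.length = 2 * n - 1 := by
        simp only [Walk.length_cons] at hlen'; omega
      have hdp : d.IsPath := hc'.1
      -- prefix of d of length n - t - 1
      obtain ⟨z, r0, d2, hdec, hr0len⟩ := exists_prefix_decomp d (n - t - 1) (by omega)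
      have hr0p : r0.IsPath := prefix_isPath hdp hdec
      have hd2len : d2.length = 2 * n - 1 - (n - t - 1) := by
        have : r0.length + d2.length = d.length := by rw [← Walk.length_append, ← hdec]
        omega
      have hc0r0 : c0 ∉ r0.support := by
        intro hmem
        have hnd := hdp.support_nodup
        rw [hdec, Walk.support_append] at hnd
        have hdisj := List.disjoint_of_nodup_append hnd
        refine hdisj hmem ?_
        -- c0 is the end of d2 and d2 is nonnil
        have hd2pos : 0 < d2.length := by omega
        cases d2 with
        | nil => simp at hd2pos
        | cons h2 e2 =>
          rw [Walk.support_cons, List.tail_cons]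
          exact Walk.end_mem_support e2
      set r : G.Walk c0 z := Walk.cons hadj r0 with hr
      have hrp : r.IsPath := by
        rw [Walk.cons_isPath_iff]
        refine ⟨hr0p, fun hmem => ?_⟩
        exact hc0r0 hmem
      have hrlen : r.length = n - t := by
        rw [hr, Walk.length_cons, hr0len]; omega
      have hrsub : ∀ y ∈ r.support, y ∈ c.support := by
        intro y hy
        rw [hr, Walk.support_cons, List.mem_cons] at hy
        rcases hy with rfl | hy
        · exact hcsub _ (Walk.start_mem_support _)
        · refine hcsub _ ?_
          rw [Walk.support_cons, List.mem_cons]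
          right
          rw [hdec, Walk.mem_support_append_iff]
          exact Or.inl hy
      -- geodesic from w0 to c0
      obtain ⟨geo, hgeop, hgeolen⟩ := (hreach w0 c0).exists_path_of_dist
      rw [← ht] at hgeolen
      -- Q = geo ++ r is a path of length n
      have hQp : (geo.append r).IsPath := by
        refine isPath_append_of hgeop hrp ?_
        intro y hy hy'
        have hyt : t ≤ G.dist w0 y := hmin y (hrsub y hy')
        have h1 : G.dist w0 y ≤ (geo.takeUntil y hy).length := SimpleGraph.dist_le _
        have h2 : (geo.takeUntil y hy).length + (geo.dropUntil y hy).length = t := by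
          rw [← Walk.length_append, Walk.take_spec geo hy, hgeolen]
        have h3 : (geo.dropUntil y hy).length = 0 := by omega
        exact (Walk.eq_of_length_eq_zero h3).symm ▸ rfl
      have hQlen : (geo.append r).length = n := by
        rw [Walk.length_append, hgeolen, hrlen]; omega
      -- geodesic from w0 to z
      obtain ⟨P2, hP2p, hP2len⟩ := (hreach w0 z).exists_path_of_dist
      have hP2short : P2.length ≤ n - 1 := hP2len ▸ hK z
      have hne2 : geo.append r ≠ P2 := by
        intro hh
        rw [hh] at hQlen
        omega
      have := h2p (geo.append r) P2 hQp hP2p hne2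
      omega



lemma walk_parity {f : V → Bool} (hf : ∀ ⦃u v⦄, G.Adj u v → f v = !f u) :
    ∀ {u v : V} (p : G.Walk u v), Even p.length ↔ (f u = f v) := by
  intro u v p
  induction p with
  | nil => simp
  | @cons u b v h p ih =>
    have hb := hf h
    rw [Walk.length_cons, Nat.even_add_one, ih]
    cases hfu : f u <;> cases hfv : f v <;> simp_all

lemma dist_parity {f : V → Bool} (hf : ∀ ⦃u v⦄, G.Adj u v → f v = !f u)
    (hreach : ∀ u v : V, G.Reachable u v) (u v : V) :
    Even (G.dist u v) ↔ (f u = f v) := by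
  obtain ⟨p, _, hlen⟩ := (hreach u v).exists_path_of_dist
  rw [← hlen]
  exact walk_parity hf p

lemma neighbor_dist {f : V → Bool} (hf : ∀ ⦃u v⦄, G.Adj u v → f v = !f u)
    (hreach : ∀ u v : V, G.Reachable u v) {z c c' : V} (h : G.Adj c c') :
    G.dist z c' = G.dist z c + 1 ∨ G.dist z c' + 1 = G.dist z c := by
  obtain ⟨p, _, hlen⟩ := (hreach z c).exists_path_of_dist
  obtain ⟨q, _, hqlen⟩ := (hreach z c').exists_path_of_dist
  have h1 : G.dist z c' ≤ G.dist z c + 1 := by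
    have := SimpleGraph.dist_le (p.append (Walk.cons h Walk.nil))
    simpa [Walk.length_append, hlen] using this
  have h2 : G.dist z c ≤ G.dist z c' + 1 := by
    have := SimpleGraph.dist_le (q.append (Walk.cons h.symm Walk.nil))
    simpa [Walk.length_append, hqlen] using this
  have hne : G.dist z c' ≠ G.dist z c := by
    intro hh
    have p1 := dist_parity hf hreach z c
    have p2 := dist_parity hf hreach z c'
    rw [hh] at p2
    have hcc := hf h
    cases h1 : f z <;> cases h2 : f c <;> simp_all
  omega

lemma unique_pred {n : ℕ}
    (h2p : ∀ {u w : V} (p q : G.Walk u w), p.IsPath → q.IsPath → p ≠ q →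
      2 * n ≤ p.length + q.length)
    (hreach : ∀ u v : V, G.Reachable u v) {z c x1 x2 : V}
    (h1 : G.Adj c x1) (h2 : G.Adj c x2) (hne : x1 ≠ x2)
    (hd1 : G.dist z x1 + 1 = G.dist z c) (hd2 : G.dist z x2 + 1 = G.dist z c) :
    n ≤ G.dist z c := by
  obtain ⟨g1, hg1p, hg1len⟩ := (hreach z x1).exists_path_of_dist
  obtain ⟨g2, hg2p, hg2len⟩ := (hreach z x2).exists_path_of_dist
  have hcP : ∀ {x : V} (hadj : G.Adj x c) (g : G.Walk z x), g.IsPath →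
      g.length + 1 = G.dist z c →
      (g.append (Walk.cons hadj Walk.nil)).IsPath := by
    intro x hadj g hgp hglen
    refine isPath_append_of hgp (by simp [hadj.ne]) ?_
    intro y hy hy'
    have hy'' : y = x ∨ y = c := by simpa using hy'
    rcases hy'' with rfl | rfl
    · rfl
    · exfalso
      have := dist_le_of_mem_support (p := g) hy
      omega
  have hP1 := hcP h1.symm g1 hg1p (by omega)
  have hP2 := hcP h2.symm g2 hg2p (by omega)
  set P1 := g1.append (Walk.cons h1.symm Walk.nil) with hP1def
  set P2 := g2.append (Walk.cons h2.symm Walk.nil) with hP2def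
  have hlen1 : P1.length = G.dist z c := by
    rw [hP1def, Walk.length_append]
    simp
    omega
  have hlen2 : P2.length = G.dist z c := by
    rw [hP2def, Walk.length_append]
    simp
    omega
  have hnePQ : P1 ≠ P2 := by
    intro hh
    have hv1 : P1.getVert (G.dist z c - 1) = x1 := by
      rw [hP1def, Walk.getVert_append]
      rw [if_neg (by omega)]
      have : G.dist z c - 1 - g1.length = 0 := by omega
      rw [this]
      simp
    have hv2 : P2.getVert (G.dist z c - 1) = x2 := by
      rw [hP2def, Walk.getVert_append]
      rw [if_neg (by omega)]
      have : G.dist z c - 1 - g2.length = 0 := by omega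
      rw [this]
      simp
    rw [hh, hv2] at hv1
    exact hne hv1.symm
  have := h2p P1 P2 hP1 hP2 hnePQ
  omega



/-- climbing within a min-degree-2 subset to distance exactly n -/
lemma climb {n : ℕ} {f : V → Bool} (hf : ∀ ⦃u v⦄, G.Adj u v → f v = !f u)
    (h2p : ∀ {u w : V} (p q : G.Walk u w), p.IsPath → q.IsPath → p ≠ q →
      2 * n ≤ p.length + q.length)
    (hreach : ∀ u v : V, G.Reachable u v) (hdist : ∀ u v : V, G.dist u v ≤ n)
    (W : Set V)
    (hW : ∀ c ∈ W, ∃ c1 ∈ W, ∃ c2 ∈ W, G.Adj c c1 ∧ G.Adj c c2 ∧ c1 ≠ c2)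
    (z : V) {c : V} (hc : c ∈ W) : ∃ x ∈ W, G.dist z x = n := by
  suffices H : ∀ m : ℕ, ∀ c ∈ W, n - G.dist z c ≤ m → ∃ x ∈ W, G.dist z x = n by
    exact H n c hc (by omega)
  intro m
  induction m with
  | zero =>
    intro c hc hm
    have := hdist z c
    exact ⟨c, hc, by omega⟩
  | succ m ih =>
    intro c hc hm
    by_cases he : G.dist z c = n
    · exact ⟨c, hc, he⟩
    · have helt : G.dist z c < n := lt_of_le_of_ne (hdist z c) he
      obtain ⟨c1, hc1W, c2, hc2W, hadj1, hadj2, hne12⟩ := hW c hc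
      have hd1 := neighbor_dist hf hreach (z := z) hadj1
      have hd2 := neighbor_dist hf hreach (z := z) hadj2
      rcases hd1 with hd1 | hd1
      · exact ih c1 hc1W (by omega)
      rcases hd2 with hd2 | hd2
      · exact ih c2 hc2W (by omega)
      · exfalso
        have := unique_pred h2p hreach hadj1 hadj2 hne12 hd1 hd2
        omega

/-- a vertex opposite a thick vertex is thick -/
lemma opposite_thick {n : ℕ} (hn : 2 ≤ n) {f : V → Bool}
    (hf : ∀ ⦃u v⦄, G.Adj u v → f v = !f u)
    (h2p : ∀ {u w : V} (p q : G.Walk u w), p.IsPath → q.IsPath → p ≠ q →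
      2 * n ≤ p.length + q.length)
    (hreach : ∀ u v : V, G.Reachable u v) (hdist : ∀ u v : V, G.dist u v ≤ n)
    {t z : V} {s1 s2 s3 : V}
    (ha1 : G.Adj t s1) (ha2 : G.Adj t s2) (ha3 : G.Adj t s3)
    (h12 : s1 ≠ s2) (h13 : s1 ≠ s3) (h23 : s2 ≠ s3)
    (hdzt : G.dist z t = n) :
    ∃ b1 b2 b3 : V, G.Adj z b1 ∧ G.Adj z b2 ∧ G.Adj z b3 ∧ b1 ≠ b2 ∧ b1 ≠ b3 ∧ b2 ≠ b3 := by
  -- each neighbor of t is at distance n - 1 from z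
  have hsd : ∀ {s : V}, G.Adj t s → G.dist z s = n - 1 := by
    intro s hs
    have hle : G.dist z s ≤ n := hdist z s
    have hge : n ≤ G.dist z s + 1 := by
      obtain ⟨g, _, hglen⟩ := (hreach z s).exists_path_of_dist
      have := SimpleGraph.dist_le (g.append (Walk.cons hs.symm Walk.nil))
      rw [hdzt] at this
      simp only [Walk.length_append, Walk.length_cons, Walk.length_nil] at this
      omega
    have hne : G.dist z s ≠ n := by
      intro hh
      have p1 := dist_parity hf hreach z t
      have p2 := dist_parity hf hreach z s
      rw [hdzt] at p1
      rw [hh] at p2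
      have hts := hf hs
      cases hb1 : f z <;> cases hb2 : f t <;> simp_all
    omega
  -- geodesics to the s_i decompose as first-step plus rest
  have hstep : ∀ {s : V}, G.Adj t s →
      ∃ (b : V) (hb : G.Adj z b) (r : G.Walk b s), r.IsPath ∧ z ∉ r.support ∧
        r.length = n - 2 := by
    intro s hs
    obtain ⟨g, hgp, hglen⟩ := (hreach z s).exists_path_of_dist
    rw [hsd hs] at hglen
    cases g with
    | nil =>
      exfalso
      simp at hglen
      omega
    | @cons _ b _ hb r =>
      rw [Walk.cons_isPath_iff] at hgp
      refine ⟨b, hb, r, hgp.1, hgp.2, ?_⟩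
      simp only [Walk.length_cons] at hglen
      omega
  obtain ⟨b1, hb1, r1, hr1p, hz1, hr1len⟩ := hstep ha1
  obtain ⟨b2, hb2, r2, hr2p, hz2, hr2len⟩ := hstep ha2
  obtain ⟨b3, hb3, r3, hr3p, hz3, hr3len⟩ := hstep ha3
  -- if two first-steps agree we get two distinct short paths to t
  have key : ∀ {b s s' : V} (r : G.Walk b s) (r' : G.Walk b s'),
      G.Adj t s → G.Adj t s' → s ≠ s' → r.IsPath → r'.IsPath → G.Adj z b →
      z ∉ r.support → z ∉ r'.support →
      r.length = n - 2 → r'.length = n - 2 → False := by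
    intro b s s' r r' hs hs' hss' hrp hr'p hzb hzr hzr' hrlen hr'len
    have htnot : ∀ {s0 : V} (r0 : G.Walk b s0), r0.length = n - 2 → G.Adj z b →
        z ∉ r0.support → t ∉ r0.support := by
      intro s0 r0 hr0len hzb0 hzr0 hmem
      have h1 : G.dist b t ≤ r0.length := by
        classical
        exact le_trans (SimpleGraph.dist_le _) (Walk.length_takeUntil_le r0 hmem)
      have h2 : G.dist z t ≤ G.dist b t + 1 := by
        obtain ⟨g, _, hglen⟩ := (hreach b t).exists_path_of_dist
        have := SimpleGraph.dist_le (Walk.cons hzb0 g)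
        simp only [Walk.length_cons, hglen] at this
        omega
      rw [hdzt] at h2
      omega
    have hP : ∀ {s0 : V} (hts0 : G.Adj s0 t) (r0 : G.Walk b s0), r0.IsPath →
        z ∉ r0.support → r0.length = n - 2 →
        (r0.append (Walk.cons hts0 Walk.nil)).IsPath := by
      intro s0 hts0 r0 hr0p hzr0 hr0len
      refine isPath_append_of hr0p (by simp [hts0.ne]) ?_
      intro y hy hy'
      have hy'' : y = s0 ∨ y = t := by simpa using hy'
      rcases hy'' with rfl | rfl
      · rfl
      · exact absurd hy (htnot r0 hr0len hzb hzr0)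
    have hp1 := hP hs.symm r hrp hzr hrlen
    have hp2 := hP hs'.symm r' hr'p hzr' hr'len
    have hnePQ : r.append (Walk.cons hs.symm Walk.nil) ≠
        r'.append (Walk.cons hs'.symm Walk.nil) := by
      intro hh
      have hv1 : (r.append (Walk.cons hs.symm Walk.nil)).getVert (n - 2) = s := by
        rw [Walk.getVert_append, if_neg (by omega)]
        rw [show n - 2 - r.length = 0 by omega]
        simp
      have hv2 : (r'.append (Walk.cons hs'.symm Walk.nil)).getVert (n - 2) = s' := by
        rw [Walk.getVert_append, if_neg (by omega)]
        rw [show n - 2 - r'.length = 0 by omega]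
        simp
      rw [hh, hv2] at hv1
      exact hss' hv1.symm
    have hfin := h2p _ _ hp1 hp2 hnePQ
    simp only [Walk.length_append, Walk.length_cons, Walk.length_nil,
      hrlen, hr'len] at hfin
    omega
  refine ⟨b1, b2, b3, hb1, hb2, hb3, ?_, ?_, ?_⟩
  · rintro rfl
    exact key r1 r2 ha1 ha2 h12 hr1p hr2p hb1 hz1 hz2 hr1len hr2len
  · rintro rfl
    exact key r1 r3 ha1 ha3 h13 hr1p hr3p hb1 hz1 hz3 hr1len hr3len
  · rintro rfl
    exact key r2 r3 ha2 ha3 h23 hr2p hr3p hb2 hz2 hz3 hr2len hr3len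


end StmtAux

-- application layer (to be concatenated after defs + infra)
namespace StmtAux

lemma incGraph_bipartite (H : IncGeom) :
    ∀ ⦃u v : H.P ⊕ H.L⦄, H.incGraph.Adj u v → Sum.isLeft v = !Sum.isLeft u := by
  rintro u v (⟨p, l, rfl, rfl, h⟩ | ⟨p, l, rfl, rfl, h⟩) <;> simp

lemma adj_inl {H : IncGeom} {p : H.P} {y : H.P ⊕ H.L}
    (h : H.incGraph.Adj (Sum.inl p) y) : ∃ l, y = Sum.inr l ∧ H.I p l := by
  rcases h with ⟨p', l, hp, rfl, hI⟩ | ⟨p', l, h1, h2, hI⟩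
  · obtain rfl : p = p' := by simpa using hp
    exact ⟨l, rfl, hI⟩
  · simp at h1

lemma adj_inr {H : IncGeom} {l : H.L} {y : H.P ⊕ H.L}
    (h : H.incGraph.Adj (Sum.inr l) y) : ∃ p, y = Sum.inl p ∧ H.I p l := by
  rcases h with ⟨p', l', h1, h2, hI⟩ | ⟨p', l', hp, rfl, hI⟩
  · simp at h1
  · obtain rfl : l = l' := by simpa using hp
    exact ⟨p', rfl, hI⟩

lemma adj_of_inc {H : IncGeom} {p : H.P} {l : H.L} (h : H.I p l) :
    H.incGraph.Adj (Sum.inl p) (Sum.inr l) :=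
  Or.inl ⟨p, l, rfl, rfl, h⟩

lemma weak_unpack {H : IncGeom} {n : ℕ} (hw : H.IsWeakGenPolygon n) :
    (∀ u v : H.P ⊕ H.L, H.incGraph.Reachable u v) ∧
    (∀ u v : H.P ⊕ H.L, H.incGraph.dist u v ≤ n) ∧
    (∀ {u v : H.P ⊕ H.L} (p q : H.incGraph.Walk u v), p.IsPath → q.IsPath → p ≠ q →
      2 * n ≤ p.length + q.length) := by
  have hdiam := hw.1
  have hgir := hw.2
  have hedist : ∀ u v : H.P ⊕ H.L, H.incGraph.edist u v ≤ (n : ℕ∞) := by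
    intro u v
    rw [← hdiam]
    exact SimpleGraph.edist_le_ediam
  have hreach : ∀ u v : H.P ⊕ H.L, H.incGraph.Reachable u v := by
    intro u v
    have h1 := hedist u v
    refine SimpleGraph.reachable_of_edist_ne_top (fun hh => ?_)
    rw [hh] at h1
    exact absurd h1 (by simp)
  refine ⟨hreach, ?_, ?_⟩
  · intro u v
    obtain ⟨w, hwl⟩ := (hreach u v).exists_walk_length_eq_edist
    have : (w.length : ℕ∞) ≤ (n : ℕ∞) := hwl ▸ hedist u v
    have hwn : w.length ≤ n := by exact_mod_cast this
    exact le_trans (SimpleGraph.dist_le w) hwn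
  · intro u v p q hp hq hne
    have := egirth_le_of_two_paths p q hp hq hne
    rw [hgir] at this
    exact_mod_cast this

end StmtAux

/-- An infinite thick locally finitely chained generalized n-gon has n ∈ {3,4,6,8}
(assuming the Feit–Higman theorem). -/
theorem stmt_12 (n : ℕ) (G : IncGeom)
    (FeitHigman : ∀ H : IncGeom, Finite H.P → Finite H.L → H.IsGenPolygon n →
      n = 3 ∨ n = 4 ∨ n = 6 ∨ n = 8)
    (hinf : ¬ (Finite G.P ∧ Finite G.L))
    (hG : G.IsGenPolygon n) (hchain : G.LocFinChained n) :
    n = 3 ∨ n = 4 ∨ n = 6 ∨ n = 8 := by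
  classical
  open StmtAux in
  obtain ⟨S, hmono, hSfin, hsub, hPuniv, hLuniv⟩ := hchain
  obtain ⟨hGweak, hGthick⟩ := hG
  have hn : 2 ≤ n := by
    have h3 := SimpleGraph.three_le_egirth (G := G.incGraph)
    rw [hGweak.2] at h3
    have h3' : (3 : ℕ) ≤ 2 * n := by exact_mod_cast h3
    omega
  have hgenPmono : ∀ {i j : ℕ}, i ≤ j → G.genP n (S i) ⊆ G.genP n (S j) := by
    intro i j hij p hp Ps Ls hPoly hSub
    exact hp Ps Ls hPoly ((hmono hij).trans hSub)
  have hgenLmono : ∀ {i j : ℕ}, i ≤ j → G.genL n (S i) ⊆ G.genL n (S j) := by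
    intro i j hij l hl Ps Ls hPoly hSub
    exact hl Ps Ls hPoly ((hmono hij).trans hSub)
  have hlineidx : ∀ l : G.L, ∃ k, l ∈ G.genL n (S k) := by
    intro l
    have hl : l ∈ ⋃ i, G.genL n (S i) := by rw [hLuniv]; trivial
    exact Set.mem_iUnion.mp hl
  have hptidx : ∀ p : G.P, ∃ k, p ∈ G.genP n (S k) := by
    intro p
    have hp : p ∈ ⋃ i, G.genP n (S i) := by rw [hPuniv]; trivial
    exact Set.mem_iUnion.mp hp
  have hthickP : ∀ p : G.P, ∃ k, ∃ l1 l2 l3 : G.L, l1 ≠ l2 ∧ l1 ≠ l3 ∧ l2 ≠ l3 ∧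
      l1 ∈ G.genL n (S k) ∧ l2 ∈ G.genL n (S k) ∧ l3 ∈ G.genL n (S k) ∧
      G.I p l1 ∧ G.I p l2 ∧ G.I p l3 := by
    intro p
    obtain ⟨l1, l2, l3, h12, h13, h23, hI1, hI2, hI3⟩ := hGthick.1 p
    obtain ⟨k1, hk1⟩ := hlineidx l1
    obtain ⟨k2, hk2⟩ := hlineidx l2
    obtain ⟨k3, hk3⟩ := hlineidx l3
    refine ⟨max (max k1 k2) k3, l1, l2, l3, h12, h13, h23, ?_, ?_, ?_, hI1, hI2, hI3⟩
    · exact hgenLmono (le_max_of_le_left (le_max_left _ _)) hk1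
    · exact hgenLmono (le_max_of_le_left (le_max_right _ _)) hk2
    · exact hgenLmono (le_max_right _ _) hk3
  have hthickL : ∀ l : G.L, ∃ k, ∃ p1 p2 p3 : G.P, p1 ≠ p2 ∧ p1 ≠ p3 ∧ p2 ≠ p3 ∧
      p1 ∈ G.genP n (S k) ∧ p2 ∈ G.genP n (S k) ∧ p3 ∈ G.genP n (S k) ∧
      G.I p1 l ∧ G.I p2 l ∧ G.I p3 l := by
    intro l
    obtain ⟨p1, p2, p3, h12, h13, h23, hI1, hI2, hI3⟩ := hGthick.2 l
    obtain ⟨k1, hk1⟩ := hptidx p1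
    obtain ⟨k2, hk2⟩ := hptidx p2
    obtain ⟨k3, hk3⟩ := hptidx p3
    refine ⟨max (max k1 k2) k3, p1, p2, p3, h12, h13, h23, ?_, ?_, ?_, hI1, hI2, hI3⟩
    · exact hgenPmono (le_max_of_le_left (le_max_left _ _)) hk1
    · exact hgenPmono (le_max_of_le_left (le_max_right _ _)) hk2
    · exact hgenPmono (le_max_right _ _) hk3
  choose FP hFP using hthickP
  choose FL hFL using hthickL
  obtain ⟨hsub0, hP0fin, hL0fin⟩ := hsub 0
  obtain ⟨j1, hj1⟩ := (hP0fin.image FP).bddAbove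
  obtain ⟨j2, hj2⟩ := (hL0fin.image FL).bddAbove
  set j := max j1 j2 with hj
  obtain ⟨hsubj, hPjfin, hLjfin⟩ := hsub j
  set H := G.restrict (G.genP n (S j)) (G.genL n (S j)) with hH
  set H0 := G.restrict (G.genP n (S 0)) (G.genL n (S 0)) with hH0
  obtain ⟨hreachJ, hdistJ, h2pJ⟩ := StmtAux.weak_unpack (H := H) hsubj
  have hfJ := StmtAux.incGraph_bipartite H
  obtain ⟨hreach0, hdist0, h2p0⟩ := StmtAux.weak_unpack (H := H0) hsub0
  -- the inclusion of the stage-0 geometry into the stage-j geometry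
  set ι : (H0.P ⊕ H0.L) → (H.P ⊕ H.L) :=
    Sum.map (fun p => ⟨p.1, hgenPmono (Nat.zero_le j) p.2⟩)
      (fun l => ⟨l.1, hgenLmono (Nat.zero_le j) l.2⟩) with hι
  have hιadj : ∀ {x y : H0.P ⊕ H0.L}, H0.incGraph.Adj x y →
      H.incGraph.Adj (ι x) (ι y) := by
    rintro x y (⟨p, l, rfl, rfl, hI⟩ | ⟨p, l, rfl, rfl, hI⟩)
    · exact Or.inl ⟨_, _, rfl, rfl, hI⟩
    · exact Or.inr ⟨_, _, rfl, rfl, hI⟩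
  have hιinj : Function.Injective ι := by
    intro x y hxy
    cases x with
    | inl p =>
      cases y with
      | inl p' =>
        replace hxy := Sum.inl_injective (show (Sum.inl _ : H.P ⊕ H.L) = Sum.inl _ from hxy)
        have hv := congrArg Subtype.val hxy
        exact congrArg Sum.inl (Subtype.ext hv)
      | inr l' => exact absurd (show (Sum.inl _ : H.P ⊕ H.L) = Sum.inr _ from hxy) Sum.inl_ne_inr
    | inr l =>
      cases y with
      | inl p' => exact absurd (show (Sum.inr _ : H.P ⊕ H.L) = Sum.inl _ from hxy) Sum.inr_ne_inl
      | inr l' =>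
        replace hxy := Sum.inr_injective (show (Sum.inr _ : H.P ⊕ H.L) = Sum.inr _ from hxy)
        have hv := congrArg Subtype.val hxy
        exact congrArg Sum.inr (Subtype.ext hv)
  set W : Set (H.P ⊕ H.L) := Set.range ι with hWdef
  have hW : ∀ c ∈ W, ∃ c1 ∈ W, ∃ c2 ∈ W, H.incGraph.Adj c c1 ∧ H.incGraph.Adj c c2 ∧
      c1 ≠ c2 := by
    rintro c ⟨c0, rfl⟩
    obtain ⟨w, w', haw, haw', hww'⟩ :=
      StmtAux.two_neighbors hn hreach0 hdist0 hsub0.2 c0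
    exact ⟨ι w, ⟨w, rfl⟩, ι w', ⟨w', rfl⟩, hιadj haw, hιadj haw',
      fun hh => hww' (hιinj hh)⟩
  have hnac0 : ¬ H0.incGraph.IsAcyclic := by
    rw [← SimpleGraph.egirth_eq_top, hsub0.2]
    exact ENat.coe_ne_top _
  obtain ⟨a0, -, -, -⟩ := SimpleGraph.exists_egirth_eq_length.mpr hnac0
  have hthickW : ∀ x ∈ W, ∃ s1 s2 s3 : H.P ⊕ H.L, H.incGraph.Adj x s1 ∧
      H.incGraph.Adj x s2 ∧ H.incGraph.Adj x s3 ∧ s1 ≠ s2 ∧ s1 ≠ s3 ∧ s2 ≠ s3 := by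
    rintro x ⟨x0, rfl⟩
    cases x0 with
    | inl p =>
      obtain ⟨l1, l2, l3, h12, h13, h23, hm1, hm2, hm3, hI1, hI2, hI3⟩ := hFP p.1
      have hple : FP p.1 ≤ j := le_trans (hj1 ⟨p.1, p.2, rfl⟩) (le_max_left _ _)
      refine ⟨Sum.inr ⟨l1, hgenLmono hple hm1⟩, Sum.inr ⟨l2, hgenLmono hple hm2⟩,
        Sum.inr ⟨l3, hgenLmono hple hm3⟩, ?_, ?_, ?_, ?_, ?_, ?_⟩
      · exact Or.inl ⟨_, _, rfl, rfl, hI1⟩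
      · exact Or.inl ⟨_, _, rfl, rfl, hI2⟩
      · exact Or.inl ⟨_, _, rfl, rfl, hI3⟩
      · intro hh
        apply h12
        have hv := congrArg Subtype.val (Sum.inr_injective hh)
        exact hv
      · intro hh
        apply h13
        have hv := congrArg Subtype.val (Sum.inr_injective hh)
        exact hv
      · intro hh
        apply h23
        have hv := congrArg Subtype.val (Sum.inr_injective hh)
        exact hv
    | inr l =>
      obtain ⟨p1, p2, p3, h12, h13, h23, hm1, hm2, hm3, hI1, hI2, hI3⟩ := hFL l.1
      have hple : FL l.1 ≤ j := le_trans (hj2 ⟨l.1, l.2, rfl⟩) (le_max_right _ _)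
      refine ⟨Sum.inl ⟨p1, hgenPmono hple hm1⟩, Sum.inl ⟨p2, hgenPmono hple hm2⟩,
        Sum.inl ⟨p3, hgenPmono hple hm3⟩, ?_, ?_, ?_, ?_, ?_, ?_⟩
      · exact Or.inr ⟨_, _, rfl, rfl, hI1⟩
      · exact Or.inr ⟨_, _, rfl, rfl, hI2⟩
      · exact Or.inr ⟨_, _, rfl, rfl, hI3⟩
      · intro hh
        apply h12
        have hv := congrArg Subtype.val (Sum.inl_injective hh)
        exact hv
      · intro hh
        apply h13
        have hv := congrArg Subtype.val (Sum.inl_injective hh)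
        exact hv
      · intro hh
        apply h23
        have hv := congrArg Subtype.val (Sum.inl_injective hh)
        exact hv
  have hallthick : ∀ z : H.P ⊕ H.L, ∃ s1 s2 s3 : H.P ⊕ H.L, H.incGraph.Adj z s1 ∧
      H.incGraph.Adj z s2 ∧ H.incGraph.Adj z s3 ∧ s1 ≠ s2 ∧ s1 ≠ s3 ∧ s2 ≠ s3 := by
    intro z
    have hc : ι a0 ∈ W := ⟨a0, rfl⟩
    obtain ⟨x, hxW, hxd⟩ :=
      StmtAux.climb hfJ h2pJ hreachJ hdistJ W hW z hc
    obtain ⟨s1, s2, s3, ha1, ha2, ha3, h12, h13, h23⟩ := hthickW x hxW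
    exact StmtAux.opposite_thick hn hfJ h2pJ hreachJ hdistJ ha1 ha2 ha3 h12 h13 h23 hxd
  have hthickH : H.Thick := by
    constructor
    · intro p
      obtain ⟨s1, s2, s3, ha1, ha2, ha3, h12, h13, h23⟩ := hallthick (Sum.inl p)
      obtain ⟨l1, rfl, hI1⟩ := StmtAux.adj_inl ha1
      obtain ⟨l2, rfl, hI2⟩ := StmtAux.adj_inl ha2
      obtain ⟨l3, rfl, hI3⟩ := StmtAux.adj_inl ha3
      exact ⟨l1, l2, l3, fun hh => h12 (by rw [hh]), fun hh => h13 (by rw [hh]),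
        fun hh => h23 (by rw [hh]), hI1, hI2, hI3⟩
    · intro l
      obtain ⟨s1, s2, s3, ha1, ha2, ha3, h12, h13, h23⟩ := hallthick (Sum.inr l)
      obtain ⟨p1, rfl, hI1⟩ := StmtAux.adj_inr ha1
      obtain ⟨p2, rfl, hI2⟩ := StmtAux.adj_inr ha2
      obtain ⟨p3, rfl, hI3⟩ := StmtAux.adj_inr ha3
      exact ⟨p1, p2, p3, fun hh => h12 (by rw [hh]), fun hh => h13 (by rw [hh]),
        fun hh => h23 (by rw [hh]), hI1, hI2, hI3⟩
  have hfin1 : Finite H.P := hPjfin.to_subtype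
  have hfin2 : Finite H.L := hLjfin.to_subtype
  exact FeitHigman H hfin1 hfin2 ⟨hsubj, hthickH⟩
end

section
/- Let i and h be positive integers with gcd(i,h) = 1, and let q = 2^h. Then the set O(i,h) = {(1 : t : t^{2^i}) | t ∈ F_q} ∪ {(0 : 0 : 1)} of points of PG(2,q) is an oval (a set of q+1 points no three of which are collinear), and all tangent lines of O(i,h) pass through the nucleus (0 : 1 : 0). -/
noncomputable section

open Projectivization
open scoped LinearAlgebra.Projectivization

variable (i h : ℕ)

/-- The Galois field with 2^h elements. -/
abbrev F (h : ℕ) := GaloisField 2 h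

lemma vec1_ne_zero (t : F h) : ![(1 : F h), t, t ^ 2 ^ i] ≠ 0 := by
  intro hv
  have := congrFun hv 0
  simp at this

lemma vec001_ne_zero : ![(0 : F h), 0, 1] ≠ 0 := by
  intro hv
  have := congrFun hv 2
  simp at this

lemma vec010_ne_zero : ![(0 : F h), 1, 0] ≠ 0 := by
  intro hv
  have := congrFun hv 1
  simp at this

/-- The Segre point set O(i,h) in PG(2, 2^h). -/
def segreOval : Set (ℙ (F h) (Fin 3 → F h)) :=
  {x | ∃ t : F h, x = Projectivization.mk (F h) ![1, t, t ^ 2 ^ i] (vec1_ne_zero i h t)} ∪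
    {Projectivization.mk (F h) ![0, 0, 1] (vec001_ne_zero h)}

/-- The nucleus (0 : 1 : 0). -/
def nucleus : ℙ (F h) (Fin 3 → F h) :=
  Projectivization.mk (F h) ![0, 1, 0] (vec010_ne_zero h)

/-- The projective line defined by a nonzero linear functional. -/
def projLine (φ : (Fin 3 → F h) →ₗ[F h] F h) : Set (ℙ (F h) (Fin 3 → F h)) :=
  {x | φ x.rep = 0}

lemma pow_mul_fix (x : F h) (a : ℕ) (hx : x ^ 2 ^ a = x) : ∀ q, x ^ 2 ^ (a * q) = x := by
  intro q
  induction q with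
  | zero => simp
  | succ n ih =>
    rw [Nat.mul_succ, pow_add, pow_mul, ih, hx]

lemma gcd_fix (x : F h) : ∀ a b : ℕ, x ^ 2 ^ a = x → x ^ 2 ^ b = x → x ^ 2 ^ Nat.gcd a b = x := by
  intro a b
  induction a, b using Nat.gcd.induction with
  | H0 b => intro _ hb; simpa using hb
  | H1 a b ha ih =>
    intro hxa hxb
    rw [Nat.gcd_rec]
    refine ih ?_ hxa
    have hb : b = a * (b / a) + b % a := (Nat.div_add_mod b a).symm ▸ by omega
    calc x ^ 2 ^ (b % a) = (x ^ 2 ^ (a * (b/a))) ^ 2 ^ (b % a) := by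
          rw [pow_mul_fix h x a hxa]
      _ = x ^ 2 ^ (a * (b/a) + b % a) := by rw [← pow_mul, ← pow_add]
      _ = x := by rw [← hb, hxb]

lemma pow_q_fix (hh : 0 < h) (x : F h) : x ^ 2 ^ h = x := by
  haveI : Fintype (F h) := Fintype.ofFinite _
  have hc : Fintype.card (F h) = 2 ^ h := by
    rw [← Nat.card_eq_fintype_card, GaloisField.card 2 h hh.ne']
  rw [← hc]
  exact FiniteField.pow_card x

/-- If `c ≠ 0` and `c ^ (2^i - 1) = 1` then `c = 1`. -/
lemma eq_one_of_pow_sub_one (hi : 0 < i) (hh : 0 < h) (hgcd : Nat.gcd i h = 1)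
    (c : F h) (hc : c ≠ 0) (h1 : c ^ (2 ^ i - 1) = 1) : c = 1 := by
  have hki : c ^ 2 ^ i = c := by
    have : 2 ^ i - 1 + 1 = 2 ^ i := by have := Nat.one_le_two_pow (n := i); omega
    calc c ^ 2 ^ i = c ^ (2 ^ i - 1) * c := by rw [← pow_succ, this]
      _ = c := by rw [h1, one_mul]
  have h2 : c ^ 2 ^ 1 = c := by
    have := gcd_fix h c i h hki (pow_q_fix h hh c)
    rwa [hgcd] at this
  have : c * c = c * 1 := by rw [mul_one]; rw [pow_one, sq] at h2; exact h2
  exact mul_left_cancel₀ hc this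

lemma pow_sub_one_bij (hi : 0 < i) (hh : 0 < h) (hgcd : Nat.gcd i h = 1) :
    Function.Bijective (fun u : (F h)ˣ => u ^ (2 ^ i - 1)) := by
  rw [Finite.injective_iff_bijective.symm]
  intro a b hab
  simp only at hab
  have : (a * b⁻¹) ^ (2 ^ i - 1) = 1 := by
    rw [mul_pow, hab, inv_pow, mul_inv_cancel]
  have h1 : ((a * b⁻¹ : (F h)ˣ) : F h) = 1 := by
    have := eq_one_of_pow_sub_one i h hi hh hgcd ((a : F h) * (b : F h)⁻¹) (by simp)
      (by
        have := congrArg (Units.val) this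
        push_cast at this
        simpa using this)
    simpa using this
  have : (a : F h) = b := by
    rw [Units.val_mul, Units.val_inv_eq_inv_val] at h1
    exact (mul_inv_eq_one₀ b.ne_zero).mp h1
  exact Units.ext this

/-- Key determinant nonvanishing for three affine points. -/
lemma det_affine (hi : 0 < i) (hh : 0 < h) (hgcd : Nat.gcd i h = 1)
    (s t u : F h) (hst : s ≠ t) (hsu : s ≠ u) (htu : t ≠ u) :
    (Matrix.of ![![1, s, s ^ 2 ^ i], ![1, t, t ^ 2 ^ i], ![1, u, u ^ 2 ^ i]]).det ≠ 0 := by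
  have h2 : (2 : F h) = 0 := by
    have := CharTwo.add_self_eq_zero (1 : F h); linear_combination this
  have hdet : (Matrix.of ![![1, s, s ^ 2 ^ i], ![1, t, t ^ 2 ^ i], ![1, u, u ^ 2 ^ i]]).det
      = (s + t) ^ 2 ^ i * (s + u) + (s + u) ^ 2 ^ i * (s + t) := by
    rw [Matrix.det_fin_three]
    simp only [Matrix.of_apply, Matrix.cons_val', Matrix.cons_val_zero, Matrix.cons_val_one,
      Matrix.head_cons, Matrix.empty_val', Matrix.cons_val_fin_one, Matrix.head_fin_const,
      Matrix.cons_val_two, Matrix.tail_cons]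
    rw [add_pow_char_pow (x := s) (y := t), add_pow_char_pow (x := s) (y := u)]
    linear_combination (-(t ^ 2 ^ i * u) - s * u ^ 2 ^ i - s ^ 2 ^ i * t - s * s ^ 2 ^ i) * h2
  rw [hdet]
  intro hzero
  have ha : s + t ≠ 0 := fun hc => hst (by linear_combination hc - t * h2)
  have hb : s + u ≠ 0 := fun hc => hsu (by linear_combination hc - u * h2)
  have heq : (s + t) ^ 2 ^ i * (s + u) = (s + u) ^ 2 ^ i * (s + t) := by
    linear_combination hzero - ((s + u) ^ 2 ^ i * (s + t)) * h2
  have hc : (s + t) / (s + u) ≠ 0 := div_ne_zero ha hb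
  have hpow : ((s + t) / (s + u)) ^ (2 ^ i - 1) = 1 := by
    have hk : 2 ^ i - 1 + 1 = 2 ^ i := by have := Nat.one_le_two_pow (n := i); omega
    have hx : ((s + t) / (s + u)) ^ (2 ^ i - 1 + 1) = (s + t) / (s + u) := by
      rw [hk, div_pow, div_eq_div_iff (pow_ne_zero _ hb) hb]
      linear_combination heq
    rw [pow_succ] at hx
    exact mul_right_cancel₀ hc (by rw [hx, one_mul])
  have hone := eq_one_of_pow_sub_one i h hi hh hgcd _ hc hpow
  rw [div_eq_one_iff_eq hb] at hone
  exact htu (by linear_combination hone)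

/-- Linear independence of representatives from a nonvanishing determinant. -/
lemma li_of_mk (x y z : ℙ (F h) (Fin 3 → F h)) (v0 v1 v2 : Fin 3 → F h)
    (h0 : v0 ≠ 0) (h1 : v1 ≠ 0) (h2 : v2 ≠ 0)
    (hx : x = Projectivization.mk (F h) v0 h0)
    (hy : y = Projectivization.mk (F h) v1 h1)
    (hz : z = Projectivization.mk (F h) v2 h2)
    (hdet : (Matrix.of ![v0, v1, v2]).det ≠ 0) :
    LinearIndependent (F h) ![x.rep, y.rep, z.rep] := by
  subst hx hy hz
  have base : LinearIndependent (F h) (fun j => (Matrix.of ![v0, v1, v2]) j) :=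
    Matrix.linearIndependent_rows_iff_isUnit.mpr
      ((Matrix.isUnit_iff_isUnit_det _).mpr (isUnit_iff_ne_zero.mpr hdet))
  obtain ⟨a0, ha0⟩ := Projectivization.exists_smul_eq_mk_rep (F h) v0 h0
  obtain ⟨a1, ha1⟩ := Projectivization.exists_smul_eq_mk_rep (F h) v1 h1
  obtain ⟨a2, ha2⟩ := Projectivization.exists_smul_eq_mk_rep (F h) v2 h2
  have res := base.units_smul ![a0, a1, a2]
  have heq : (![a0, a1, a2] : Fin 3 → (F h)ˣ) • (fun j => (Matrix.of ![v0, v1, v2]) j)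
      = ![(Projectivization.mk (F h) v0 h0).rep, (Projectivization.mk (F h) v1 h1).rep,
          (Projectivization.mk (F h) v2 h2).rep] := by
    funext j
    fin_cases j <;>
      simp only [Pi.smul_apply', Matrix.cons_val_zero, Matrix.cons_val_one, Matrix.head_cons,
        Matrix.cons_val_two, Matrix.tail_cons, Matrix.of_apply, Fin.isValue] <;>
      [exact ha0; exact ha1; exact ha2]
  rwa [heq] at res

/-- Decomposition of a linear functional on explicit affine vectors. -/
lemma phi_affine (φ : (Fin 3 → F h) →ₗ[F h] F h) (t s : F h) :
    φ ![1, t, s] = φ ![1, 0, 0] + t * φ ![0, 1, 0] + s * φ ![0, 0, 1] := by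
  have hv : (![1, t, s] : Fin 3 → F h)
      = ![1, 0, 0] + t • ![0, 1, 0] + s • ![0, 0, 1] := by
    funext j; fin_cases j <;> simp
  rw [hv, map_add, map_add, map_smul, map_smul, smul_eq_mul, smul_eq_mul]


/-- Affine parameters are recovered from the projective point. -/
lemma affine_inj {s t : F h}
    (hst : Projectivization.mk (F h) ![1, s, s ^ 2 ^ i] (vec1_ne_zero i h s)
      = Projectivization.mk (F h) ![1, t, t ^ 2 ^ i] (vec1_ne_zero i h t)) : s = t := by
  rw [Projectivization.mk_eq_mk_iff] at hst
  obtain ⟨a, ha⟩ := hst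
  have h0 := congrFun ha 0
  have h1 := congrFun ha 1
  simp [Units.smul_def] at h0 h1
  rw [h0] at h1
  simpa using h1.symm

/-- The point at infinity is not affine. -/
lemma affine_ne_inf (t : F h) :
    Projectivization.mk (F h) ![1, t, t ^ 2 ^ i] (vec1_ne_zero i h t)
      ≠ Projectivization.mk (F h) ![0, 0, 1] (vec001_ne_zero h) := by
  intro he
  rw [Projectivization.mk_eq_mk_iff] at he
  obtain ⟨a, ha⟩ := he
  have h0 := congrFun ha 0
  simp [Units.smul_def] at h0

/-- Membership of a point given by `mk` in a line. -/
lemma mem_projLine_iff (φ : (Fin 3 → F h) →ₗ[F h] F h) (v : Fin 3 → F h) (hv : v ≠ 0) :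
    Projectivization.mk (F h) v hv ∈ projLine h φ ↔ φ v = 0 := by
  obtain ⟨a, ha⟩ := Projectivization.exists_smul_eq_mk_rep (F h) v hv
  constructor
  · intro hm
    have hz : φ ((Projectivization.mk (F h) v hv).rep) = 0 := hm
    rw [← ha] at hz
    simpa [Units.smul_def, map_smul, smul_eq_mul, Units.mul_right_eq_zero] using hz
  · intro hout
    show φ ((Projectivization.mk (F h) v hv).rep) = 0
    rw [← ha]
    simp [Units.smul_def, map_smul, hout]

/-- Segre's theorem: for gcd(i,h) = 1 and q = 2^h, the set
O(i,h) = {(1 : t : t^{2^i})} ∪ {(0:0:1)} is an oval of PG(2,q) (q+1 points, no three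
collinear), and every tangent line of it passes through the nucleus (0:1:0). -/
theorem stmt_14 (hi : 0 < i) (hh : 0 < h) (hgcd : Nat.gcd i h = 1) :
    (segreOval i h).ncard = 2 ^ h + 1 ∧
    (∀ x y z : ℙ (F h) (Fin 3 → F h), x ∈ segreOval i h → y ∈ segreOval i h →
      z ∈ segreOval i h → x ≠ y → x ≠ z → y ≠ z →
      LinearIndependent (F h) ![x.rep, y.rep, z.rep]) ∧
    (∀ φ : (Fin 3 → F h) →ₗ[F h] F h, φ ≠ 0 →
      (projLine h φ ∩ segreOval i h).ncard = 1 → nucleus h ∈ projLine h φ) := by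
  have h2F : (2 : F h) = 0 := by
    have := CharTwo.add_self_eq_zero (1 : F h); linear_combination this
  refine ⟨?_, ?_, ?_⟩
  · -- cardinality
    haveI : Finite (ℙ (F h) (Fin 3 → F h)) := Quotient.finite _
    set f : F h → ℙ (F h) (Fin 3 → F h) :=
      fun t => Projectivization.mk (F h) ![1, t, t ^ 2 ^ i] (vec1_ne_zero i h t) with hf
    have hso : segreOval i h
        = Set.range f ∪ {Projectivization.mk (F h) ![0, 0, 1] (vec001_ne_zero h)} := by
      unfold segreOval
      congr 1
      ext x
      simp only [Set.mem_setOf_eq, Set.mem_range, hf]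
      exact ⟨fun ⟨t, ht⟩ => ⟨t, ht.symm⟩, fun ⟨t, ht⟩ => ⟨t, ht.symm⟩⟩
    have finj : Function.Injective f := fun s t hst => affine_inj i h hst
    have hdisj : Disjoint (Set.range f)
        ({Projectivization.mk (F h) ![0, 0, 1] (vec001_ne_zero h)} : Set _) := by
      rw [Set.disjoint_singleton_right]
      rintro ⟨t, ht⟩
      exact affine_ne_inf i h t ht
    rw [hso, Set.ncard_union_eq hdisj (Set.toFinite _) (Set.toFinite _),
      ← Set.image_univ, Set.ncard_image_of_injective _ finj, Set.ncard_univ,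
      GaloisField.card 2 h hh.ne', Set.ncard_singleton]
  · -- no three collinear
    intro x y z hx hy hz hxy hxz hyz
    simp only [segreOval, Set.mem_union, Set.mem_setOf_eq, Set.mem_singleton_iff] at hx hy hz
    rcases hx with ⟨s, rfl⟩ | rfl <;> rcases hy with ⟨t, rfl⟩ | rfl <;>
      rcases hz with ⟨u, rfl⟩ | rfl
    · have hst : s ≠ t := fun e => hxy (by cases e; rfl)
      have hsu : s ≠ u := fun e => hxz (by cases e; rfl)
      have htu : t ≠ u := fun e => hyz (by cases e; rfl)
      exact li_of_mk h _ _ _ _ _ _ _ _ _ rfl rfl rfl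
        (det_affine i h hi hh hgcd s t u hst hsu htu)
    · have hst : s ≠ t := fun e => hxy (by cases e; rfl)
      refine li_of_mk h _ _ _ _ _ _ _ _ _ rfl rfl rfl ?_
      rw [Matrix.det_fin_three]
      simp only [Matrix.of_apply, Matrix.cons_val', Matrix.cons_val_zero, Matrix.cons_val_one,
        Matrix.head_cons, Matrix.empty_val', Matrix.cons_val_fin_one, Matrix.head_fin_const,
        Matrix.cons_val_two, Matrix.tail_cons]
      intro hd
      exact hst (by linear_combination -hd)
    · have hsu : s ≠ u := fun e => hxz (by cases e; rfl)
      refine li_of_mk h _ _ _ _ _ _ _ _ _ rfl rfl rfl ?_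
      rw [Matrix.det_fin_three]
      simp only [Matrix.of_apply, Matrix.cons_val', Matrix.cons_val_zero, Matrix.cons_val_one,
        Matrix.head_cons, Matrix.empty_val', Matrix.cons_val_fin_one, Matrix.head_fin_const,
        Matrix.cons_val_two, Matrix.tail_cons]
      intro hd
      exact hsu (by linear_combination hd)
    · exact absurd rfl hyz
    · have htu : t ≠ u := fun e => hyz (by cases e; rfl)
      refine li_of_mk h _ _ _ _ _ _ _ _ _ rfl rfl rfl ?_
      rw [Matrix.det_fin_three]
      simp only [Matrix.of_apply, Matrix.cons_val', Matrix.cons_val_zero, Matrix.cons_val_one,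
        Matrix.head_cons, Matrix.empty_val', Matrix.cons_val_fin_one, Matrix.head_fin_const,
        Matrix.cons_val_two, Matrix.tail_cons]
      intro hd
      exact htu (by linear_combination -hd)
    · exact absurd rfl hxz
    · exact absurd rfl hxy
    · exact absurd rfl hxy
  · -- tangents through the nucleus
    intro φ hφ hcard
    suffices hb0 : φ ![0, 1, 0] = 0 by
      exact (mem_projLine_iff h φ ![0, 1, 0] (vec010_ne_zero h)).mpr hb0
    by_contra hb
    obtain ⟨p, hp⟩ := Set.ncard_eq_one.mp hcard
    have hpmem : p ∈ projLine h φ ∩ segreOval i h := by rw [hp]; exact rfl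
    obtain ⟨hpl, hpo⟩ := hpmem
    have key : ∀ t : F h, φ ![1, t, t ^ 2 ^ i] = 0 →
        Projectivization.mk (F h) ![1, t, t ^ 2 ^ i] (vec1_ne_zero i h t) = p := by
      intro t hval
      have hmem : Projectivization.mk (F h) ![1, t, t ^ 2 ^ i] (vec1_ne_zero i h t)
          ∈ projLine h φ ∩ segreOval i h :=
        ⟨(mem_projLine_iff h φ _ _).mpr hval, Set.mem_union_left _ ⟨t, rfl⟩⟩
      rw [hp] at hmem
      exact hmem
    have hk : 2 ^ i - 1 + 1 = 2 ^ i := by have := Nat.one_le_two_pow (n := i); omega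
    simp only [segreOval, Set.mem_union, Set.mem_setOf_eq, Set.mem_singleton_iff] at hpo
    rcases hpo with ⟨t0, rfl⟩ | rfl
    · -- p is an affine point
      have haff : φ ![1, t0, t0 ^ 2 ^ i] = 0 := (mem_projLine_iff h φ _ _).mp hpl
      rw [phi_affine] at haff
      by_cases hc : φ ![0, 0, 1] = 0
      · -- the point at infinity would also be on the line
        have hmem : Projectivization.mk (F h) ![0, 0, 1] (vec001_ne_zero h)
            ∈ projLine h φ ∩ segreOval i h :=
          ⟨(mem_projLine_iff h φ _ _).mpr hc, Set.mem_union_right _ rfl⟩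
        rw [hp] at hmem
        exact affine_ne_inf i h t0 hmem.symm
      · obtain ⟨w, hw⟩ := (pow_sub_one_bij i h hi hh hgcd).2
          (Units.mk0 (φ ![0, 1, 0]) hb * (Units.mk0 (φ ![0, 0, 1]) hc)⁻¹)
        set s1 : F h := (w : F h) with hs1def
        have hs1 : s1 ≠ 0 := w.ne_zero
        have hkey : s1 ^ (2 ^ i - 1) = φ ![0, 1, 0] * (φ ![0, 0, 1])⁻¹ := by
          have hval := congrArg Units.val hw
          simpa [hs1def] using hval
        have e2' : s1 ^ 2 ^ i * φ ![0, 0, 1] = φ ![0, 1, 0] * s1 := by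
          calc s1 ^ 2 ^ i * φ ![0, 0, 1] = s1 ^ (2 ^ i - 1) * s1 * φ ![0, 0, 1] := by
                rw [← pow_succ, hk]
            _ = (φ ![0, 1, 0] * (φ ![0, 0, 1])⁻¹) * s1 * φ ![0, 0, 1] := by rw [hkey]
            _ = φ ![0, 1, 0] * s1 := by field_simp
        have hval : φ ![1, t0 + s1, (t0 + s1) ^ 2 ^ i] = 0 := by
          rw [phi_affine, add_pow_char_pow]
          linear_combination haff + e2' + (φ ![0, 1, 0] * s1) * h2F
        have hpt := key (t0 + s1) hval
        have heq : t0 + s1 = t0 := affine_inj i h hpt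
        exact hs1 (by linear_combination heq)
    · -- p is the point at infinity
      have hc0 : φ ![0, 0, 1] = 0 := (mem_projLine_iff h φ _ _).mp hpl
      set t := φ ![1, 0, 0] / φ ![0, 1, 0] with ht
      have hval : φ ![1, t, t ^ 2 ^ i] = 0 := by
        rw [phi_affine, hc0, mul_zero, add_zero, ht, div_mul_cancel₀ _ hb]
        exact CharTwo.add_self_eq_zero _
      exact affine_ne_inf i h t (key t hval)


end
end

section
/- Let Γ and Γ' be generalized n-gons of order (s,s) and (s',s') respectively, and let γ: Γ^Δ → Γ'^Δ be an epimorphism between their doubles. If γ maps some point of Γ (viewed as a line of Γ^Δ, or point, depending on the convention) to a point of Γ', then γ maps all points of Γ to points of Γ' and all lines of Γ to lines of Γ', thereby inducing an epimorphism γ̲ : Γ → Γ'. If instead γ maps some point of Γ to a line of Γ', then γ induces an epimorphism Γ → (Γ')^D onto the point-line dual. -/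
/-- The double of a geometry: points are the points and lines, lines are the flags. -/
def IncGeom.double (G : IncGeom) : IncGeom where
  P := G.P ⊕ G.L
  L := {f : G.P × G.L // G.I f.1 f.2}
  I := fun x f => x = Sum.inl f.1.1 ∨ x = Sum.inr f.1.2

/-- The point-line dual of a geometry. -/
def IncGeom.dual (G : IncGeom) : IncGeom where
  P := G.L
  L := G.P
  I := fun l p => G.I p l

open SimpleGraph Walk

section Aux

section Aux
variable {V : Type*} {G : SimpleGraph V}

lemma aux_isPath_append : ∀ {a b c : V} (p : G.Walk a b) (q : G.Walk b c),
    p.IsPath → q.IsPath → (∀ x, x ∈ p.support → x ∈ q.support → x = b) →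
    (p.append q).IsPath
  | _, _, _, Walk.nil, q, _, hq, _ => by simpa using hq
  | _, _, _, Walk.cons h p', q, hp, hq, hmeet => by
    rw [Walk.cons_append, Walk.cons_isPath_iff]
    obtain ⟨hp', ha⟩ := (Walk.cons_isPath_iff _ _).mp hp
    refine ⟨aux_isPath_append p' q hp' hq (fun x hx hq' => hmeet x (by simp [hx]) hq'), ?_⟩
    rw [Walk.mem_support_append_iff]
    rintro (h1 | h2)
    · exact ha h1
    · have := hmeet _ (Walk.start_mem_support _) h2
      exact ha (this ▸ Walk.end_mem_support p')

lemma aux_isPath_concat {a b c : V} {p : G.Walk a b} (h : G.Adj b c)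
    (hp : p.IsPath) (hc : c ∉ p.support) : (p.concat h).IsPath := by
  rw [← Walk.isPath_reverse_iff, Walk.reverse_concat, Walk.cons_isPath_iff]
  exact ⟨hp.reverse, by simpa using hc⟩

lemma aux_cycle_bound {g : ℕ} (hcyc : ∀ (a : V) (w : G.Walk a a), w.IsCycle → g ≤ w.length)
    {a b : V} (h : G.Adj a b) (P : G.Walk b a) (hP : P.IsPath) (he : s(a,b) ∉ P.edges) :
    g ≤ P.length + 1 := by
  have hc : (Walk.cons h P).IsCycle := (Walk.cons_isCycle_iff P h).mpr ⟨hP, he⟩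
  simpa using hcyc a _ hc

lemma aux_twoNbrs {g : ℕ} (hcyc : ∀ (a : V) (w : G.Walk a a), w.IsCycle → g ≤ w.length)
    {x z₁ z₂ : V} (h1 : G.Adj x z₁) (h2 : G.Adj x z₂) (hne : z₁ ≠ z₂)
    (R : G.Walk z₁ z₂) (hR : R.IsPath) (hx : x ∉ R.support) :
    g ≤ R.length + 2 := by
  have hP : (R.concat h2.symm).IsPath := aux_isPath_concat _ hR hx
  have he : s(x, z₁) ∉ (R.concat h2.symm).edges := by
    rw [Walk.edges_concat]
    intro hmem
    rw [List.concat_eq_append, List.mem_append] at hmem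
    rcases hmem with hmem | hmem
    · exact hx (R.fst_mem_support_of_mem_edges hmem)
    · rw [List.mem_singleton] at hmem
      rw [Sym2.eq_iff] at hmem
      rcases hmem with ⟨ha, _⟩ | ⟨_, hb⟩
      · exact h2.ne ha
      · exact hne hb
  have := aux_cycle_bound hcyc h1 (R.concat h2.symm) hP he
  rw [Walk.length_concat] at this
  omega

lemma aux_end_not_mem_takeUntil [DecidableEq V] {a b c : V} {w : G.Walk a b}
    (hw : w.IsPath) (hc : c ∈ w.support) (hcb : c ≠ b) :
    b ∉ (w.takeUntil c hc).support := by
  intro hb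
  have hnodup : w.support.Nodup := hw.support_nodup
  rw [← w.take_spec hc, Walk.support_append] at hnodup
  have hbtail : b ∈ (w.dropUntil c hc).support.tail := by
    have hend : b ∈ (w.dropUntil c hc).support := Walk.end_mem_support _
    rw [Walk.support_eq_cons, List.mem_cons] at hend
    rcases hend with hcase | hcase
    · exact absurd hcase.symm hcb
    · exact hcase
  exact (List.disjoint_of_nodup_append hnodup) hb hbtail


lemma aux_no_two_nbrs {g : ℕ} [DecidableEq V]
    (hcyc : ∀ (a : V) (w : G.Walk a a), w.IsCycle → g ≤ w.length)
    {v x z₁ z₂ : V} {w : G.Walk v x}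
    (hw : w.IsPath) (hlen : w.length + 2 < g) (h1 : G.Adj x z₁) (h2 : G.Adj x z₂)
    (hne : z₁ ≠ z₂) (m1 : z₁ ∈ w.support) (m2 : z₂ ∈ w.support) : False := by
  by_cases hz : z₂ ∈ (w.dropUntil z₁ m1).support
  · have hR : ((w.dropUntil z₁ m1).takeUntil z₂ hz).IsPath := (hw.dropUntil m1).takeUntil hz
    have hx : x ∉ ((w.dropUntil z₁ m1).takeUntil z₂ hz).support :=
      aux_end_not_mem_takeUntil (hw.dropUntil m1) hz h2.ne'
    have hb := aux_twoNbrs hcyc h1 h2 hne _ hR hx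
    have hl1 : ((w.dropUntil z₁ m1).takeUntil z₂ hz).length ≤ (w.dropUntil z₁ m1).length :=
      Walk.length_takeUntil_le _ hz
    have hl2 : (w.dropUntil z₁ m1).length ≤ w.length := Walk.length_dropUntil_le _ m1
    omega
  · have m2' : z₂ ∈ (w.takeUntil z₁ m1).support := by
      have hm := m2
      rw [← w.take_spec m1, Walk.mem_support_append_iff] at hm
      tauto
    have hR : ((w.takeUntil z₁ m1).dropUntil z₂ m2').IsPath := (hw.takeUntil m1).dropUntil m2'
    have hx : x ∉ ((w.takeUntil z₁ m1).dropUntil z₂ m2').support := by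
      intro hxR
      exact aux_end_not_mem_takeUntil hw m1 h1.ne'
        (Walk.support_dropUntil_subset _ m2' hxR)
    have hb := aux_twoNbrs hcyc h2 h1 hne.symm _ hR hx
    have hl1 : ((w.takeUntil z₁ m1).dropUntil z₂ m2').length ≤ (w.takeUntil z₁ m1).length :=
      Walk.length_dropUntil_le _ m2'
    have hl2 : (w.takeUntil z₁ m1).length ≤ w.length := Walk.length_takeUntil_le _ m1
    omega

lemma aux_first_meet {b : V} (S : V → Prop) (hb : S b) :
    ∀ {c : V} (P : G.Walk c b),
    ∃ (e : V) (pre : G.Walk c e) (post : G.Walk e b),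
      P = pre.append post ∧ S e ∧ ∀ x ∈ pre.support, S x → x = e
  | _, Walk.nil => ⟨b, Walk.nil, Walk.nil, rfl, hb, by simp⟩
  | c, Walk.cons h P' => by
    by_cases hu : S c
    · exact ⟨c, Walk.nil, Walk.cons h P', by simp, hu, by simp⟩
    · obtain ⟨e, pre, post, hP, hS, hfirst⟩ := aux_first_meet S hb P'
      refine ⟨e, Walk.cons h pre, post, by rw [Walk.cons_append, hP], hS, ?_⟩
      intro x hx hSx
      rw [Walk.support_cons, List.mem_cons] at hx
      rcases hx with rfl | hx
      · exact absurd hSx hu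
      · exact hfirst x hx hSx

lemma aux_short_paths_length_eq {g : ℕ} [DecidableEq V]
    (hcyc : ∀ (a : V) (w : G.Walk a a), w.IsCycle → g ≤ w.length) :
    ∀ (N : ℕ) {a b : V} (p q : G.Walk a b), p.IsPath → q.IsPath →
      p.length + q.length ≤ N → N < g → p.length = q.length := by
  intro N
  induction N using Nat.strong_induction_on with
  | _ N ih =>
    intro a b p q hp hq hsum hlt
    cases p with
    | nil =>
      have hq' : q = Walk.nil := Walk.isPath_iff_eq_nil.mp hq
      simp [hq']
    | @cons _ c _ h₁ p₁ =>
      cases q with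
      | nil =>
        have := Walk.isPath_iff_eq_nil.mp hp
        simp at this
      | @cons _ d _ h₂ q₂ =>
        obtain ⟨hp₁, ha⟩ := (Walk.cons_isPath_iff _ _).mp hp
        obtain ⟨hq₂, ha'⟩ := (Walk.cons_isPath_iff _ _).mp hq
        by_cases hc : c ∈ (Walk.cons h₂ q₂).support
        · have hspec := (Walk.cons h₂ q₂).take_spec hc
          have ht : ((Walk.cons h₂ q₂).takeUntil c hc).IsPath := hq.takeUntil hc
          have hr : ((Walk.cons h₂ q₂).dropUntil c hc).IsPath := hq.dropUntil hc
          have hlen_q : ((Walk.cons h₂ q₂).takeUntil c hc).length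
              + ((Walk.cons h₂ q₂).dropUntil c hc).length = q₂.length + 1 := by
            have := congrArg Walk.length hspec
            rw [Walk.length_append] at this
            simpa using this
          have htlen : 1 ≤ ((Walk.cons h₂ q₂).takeUntil c hc).length := by
            rcases Nat.eq_zero_or_pos ((Walk.cons h₂ q₂).takeUntil c hc).length with h0 | h0
            · exact absurd (Walk.eq_of_length_eq_zero h0) h₁.ne
            · exact h0
          have hsum' : p₁.length + 1 + (q₂.length + 1) ≤ N := by
            simp only [Walk.length_cons] at hsum; omega
          have hNlt : p₁.length + ((Walk.cons h₂ q₂).dropUntil c hc).length < N := by omega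
          have e₁ : p₁.length = ((Walk.cons h₂ q₂).dropUntil c hc).length :=
            ih (p₁.length + ((Walk.cons h₂ q₂).dropUntil c hc).length) hNlt
              p₁ ((Walk.cons h₂ q₂).dropUntil c hc) hp₁ hr le_rfl (by omega)
          by_cases hdeg : p₁.length + ((Walk.cons h₂ q₂).dropUntil c hc).length = 0
          · have hcb : c = b := Walk.eq_of_length_eq_zero (p := p₁) (by omega)
            subst hcb
            by_contra hnel
            have hq2pos : 1 ≤ q₂.length := by
              simp only [Walk.length_cons] at hnel ⊢
              omega
            have hedge : s(a, c) ∉ (Walk.cons h₂ q₂).edges := by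
              rw [Walk.edges_cons, List.mem_cons]
              rintro (hmem | hmem)
              · rw [Sym2.eq_iff] at hmem
                rcases hmem with ⟨_, hcd⟩ | ⟨_, hca⟩
                · subst hcd
                  have hnil : q₂ = Walk.nil := Walk.isPath_iff_eq_nil.mp hq₂
                  rw [hnil] at hq2pos
                  simp at hq2pos
                · exact h₁.ne hca.symm
              · exact ha' (Walk.fst_mem_support_of_mem_edges q₂ hmem)
            have hbd := aux_cycle_bound hcyc h₁ (Walk.cons h₂ q₂).reverse hq.reverse
              (by rw [Walk.edges_reverse, List.mem_reverse]; exact hedge)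
            rw [Walk.length_reverse] at hbd
            simp only [Walk.length_cons] at hbd hsum
            omega
          -- marker
          · have e₂ : (Walk.cons h₁ (Walk.nil : G.Walk c c)).length
                = ((Walk.cons h₂ q₂).takeUntil c hc).length := by
              exact ih (1 + ((Walk.cons h₂ q₂).takeUntil c hc).length) (by omega)
                (Walk.cons h₁ (Walk.nil : G.Walk c c)) ((Walk.cons h₂ q₂).takeUntil c hc)
                (by simp [Walk.cons_isPath_iff, h₁.ne]) ht (by simp) (by omega)
            simp only [Walk.length_cons, Walk.length_nil] at e₁ e₂ ⊢
            omega
        · obtain ⟨e, pre, post, hP, heq, hfirst⟩ :=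
            aux_first_meet (fun x => x ∈ (Walk.cons h₂ q₂).support)
              (Walk.end_mem_support _) p₁
          have hpre : pre.IsPath := by
            rw [hP] at hp₁
            exact hp₁.of_append_left
          have ht : ((Walk.cons h₂ q₂).takeUntil e heq).IsPath := hq.takeUntil heq
          have hR : (pre.append ((Walk.cons h₂ q₂).takeUntil e heq).reverse).IsPath := by
            refine aux_isPath_append _ _ hpre ht.reverse ?_
            intro x hx hxt
            rw [Walk.support_reverse, List.mem_reverse] at hxt
            exact hfirst x hx (Walk.support_takeUntil_subset _ heq hxt)
          have hedge : s(a, c) ∉ (pre.append ((Walk.cons h₂ q₂).takeUntil e heq).reverse).edges := by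
            rw [Walk.edges_append, List.mem_append]
            rintro (hmem | hmem)
            · refine ha ?_
              rw [hP, Walk.mem_support_append_iff]
              exact Or.inl (Walk.fst_mem_support_of_mem_edges pre hmem)
            · rw [Walk.edges_reverse, List.mem_reverse] at hmem
              exact hc (Walk.support_takeUntil_subset _ heq
                (Walk.snd_mem_support_of_mem_edges _ hmem))
          have hbd := aux_cycle_bound hcyc h₁ _ hR hedge
          rw [Walk.length_append, Walk.length_reverse] at hbd
          have hl1 : pre.length ≤ p₁.length := by
            have := congrArg Walk.length hP
            rw [Walk.length_append] at this
            omega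
          have hl2 : ((Walk.cons h₂ q₂).takeUntil e heq).length ≤ q₂.length + 1 := by
            have := Walk.length_takeUntil_le (Walk.cons h₂ q₂) heq
            simpa using this
          simp only [Walk.length_cons] at hsum
          omega

lemma aux_grow {g : ℕ} [DecidableEq V]
    (hcyc : ∀ (a : V) (w : G.Walk a a), w.IsCycle → g ≤ w.length)
    (hdeg : ∀ x : V, ∃ z₁ z₂ : V, z₁ ≠ z₂ ∧ G.Adj x z₁ ∧ G.Adj x z₂)
    (v : V) : ∀ k : ℕ, k + 1 < g → ∃ (u : V) (w : G.Walk v u), w.IsPath ∧ w.length = k := by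
  intro k
  induction k with
  | zero => exact fun _ => ⟨v, Walk.nil, by simp, rfl⟩
  | succ k ihk =>
    intro hk
    obtain ⟨u, w, hwp, hwl⟩ := ihk (by omega)
    obtain ⟨z₁, z₂, hne, h1, h2⟩ := hdeg u
    have hpick : ∃ z, G.Adj u z ∧ z ∉ w.support := by
      by_cases hz₁ : z₁ ∈ w.support
      · by_cases hz₂ : z₂ ∈ w.support
        · exact absurd (aux_no_two_nbrs hcyc hwp (by omega) h1 h2 hne hz₁ hz₂) (by simp)
        · exact ⟨z₂, h2, hz₂⟩
      · exact ⟨z₁, h1, hz₁⟩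
    obtain ⟨z, hz, hzs⟩ := hpick
    exact ⟨z, w.concat hz, aux_isPath_concat hz hwp hzs, by rw [Walk.length_concat]; omega⟩

lemma aux_end_mem_tail : ∀ {u v : V} (w : G.Walk u v), ¬w.Nil → v ∈ w.support.tail
  | _, _, Walk.nil, h => absurd Walk.nil_nil h
  | _, _, Walk.cons _ p, _ => by
    rw [Walk.support_cons, List.tail_cons]
    exact Walk.end_mem_support p

lemma aux_cycle_two_nbrs {a : V} {w : G.Walk a a} (hw : w.IsCycle) :
    ∃ (x y z : V), y ≠ z ∧ G.Adj x y ∧ G.Adj x z := by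
  have h3 := hw.three_le_length
  cases w with
  | nil => simp at h3
  | @cons _ b _ h w₁ =>
    cases w₁ with
    | nil => simp at h3
    | @cons _ c _ h₂ w₂ =>
      refine ⟨b, a, c, ?_, h.symm, h₂⟩
      intro hac
      have htail := hw.support_nodup
      rw [Walk.support_cons, Walk.support_cons, List.tail_cons] at htail
      have hnn : ¬w₂.Nil := by
        rw [Walk.nil_iff_length_eq]
        simp only [Walk.length_cons] at h3
        omega
      have hmem : a ∈ w₂.support.tail := aux_end_mem_tail w₂ hnn
      rcases List.nodup_cons.mp htail with ⟨_, htail2⟩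
      rw [Walk.support_eq_cons w₂, List.nodup_cons] at htail2
      rcases htail2 with ⟨hcnot, _⟩
      exact hcnot (hac ▸ hmem)

lemma aux_transfer {V' : Type*} {H : SimpleGraph V'} {f : V → V'}
    (hf : ∀ ⦃x y⦄, G.Adj x y → H.Adj (f x) (f y) ∨ f x = f y) :
    ∀ {x y : V} (w : G.Walk x y), ∃ w' : H.Walk (f x) (f y), w'.length ≤ w.length
  | _, _, Walk.nil => ⟨Walk.nil, by simp⟩
  | _, _, Walk.cons h w => by
    obtain ⟨w', hw'⟩ := aux_transfer hf w
    rcases hf h with h' | h'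
    · exact ⟨Walk.cons h' w', by simp only [Walk.length_cons]; omega⟩
    · refine ⟨w'.copy h'.symm rfl, ?_⟩
      rw [Walk.length_copy, Walk.length_cons]
      omega

lemma aux_two_of_ncard {α : Type*} {S : Set α} {m : ℕ} (h : S.ncard = m + 2) :
    ∃ a b, a ∈ S ∧ b ∈ S ∧ a ≠ b := by
  have hfin : S.Finite := by
    by_contra h'
    rw [Set.Infinite.ncard (by simpa using h')] at h
    omega
  exact (Set.one_lt_ncard_iff hfin).mp (by omega)

end Aux

section GeomAux

lemma aux_adj_isLeft {Γ : IncGeom} {x y : Γ.P ⊕ Γ.L} (h : Γ.incGraph.Adj x y) :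
    x.isLeft = !y.isLeft := by
  rcases h with ⟨p, l, rfl, rfl, _⟩ | ⟨p, l, rfl, rfl, _⟩ <;> simp

lemma aux_parity {Γ : IncGeom} : ∀ {x y : Γ.P ⊕ Γ.L} (w : Γ.incGraph.Walk x y),
    Even w.length ↔ (x.isLeft = y.isLeft)
  | _, _, Walk.nil => by simp
  | _, _, @Walk.cons _ _ x z y h w => by
    have h1 := aux_adj_isLeft h
    have h2 := aux_parity w
    rw [Walk.length_cons, Nat.even_add_one, h1]
    cases hz : z.isLeft <;> cases hy : y.isLeft <;>
      simp only [hz, hy] at h2 <;> simp_all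

end GeomAux

/-- An epimorphism between the doubles of generalized n-gons of orders (s,s) and
(s'"'"',s'"'"') either sends all points of Γ to points of Γ'"'"' and all lines to lines, inducing
an epimorphism Γ → Γ'"'"', or sends all points of Γ to lines of Γ'"'"', inducing an
epimorphism Γ → (Γ'"'"')^D onto the dual. -/
theorem stmt_15 (n s s' : ℕ) (hn : 2 ≤ n) (Γ Γ' : IncGeom)
    (hΓ : Γ.IsWeakGenPolygon n) (hΓord : Γ.HasOrder s s)
    (hΓ' : Γ'.IsWeakGenPolygon n) (hΓ'ord : Γ'.HasOrder s' s')
    (γ : IncMor Γ.double Γ'.double) (hepi : γ.IsEpi) :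
    ((∃ (p : Γ.P) (p' : Γ'.P), γ.fP (Sum.inl p) = Sum.inl p') →
      ∃ δ : IncMor Γ Γ', δ.IsEpi ∧
        (∀ p : Γ.P, γ.fP (Sum.inl p) = Sum.inl (δ.fP p)) ∧
        (∀ l : Γ.L, γ.fP (Sum.inr l) = Sum.inr (δ.fL l))) ∧
    ((∃ (p : Γ.P) (l' : Γ'.L), γ.fP (Sum.inl p) = Sum.inr l') →
      ∃ δ : IncMor Γ Γ'.dual, δ.IsEpi ∧
        (∀ p : Γ.P, γ.fP (Sum.inl p) = Sum.inr (δ.fP p)) ∧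
        (∀ l : Γ.L, γ.fP (Sum.inr l) = Sum.inl (δ.fL l))) := by
  classical
  -- girth bound for Γ' in ℕ
  have hcyc : ∀ (a : Γ'.P ⊕ Γ'.L) (w : Γ'.incGraph.Walk a a), w.IsCycle → 2 * n ≤ w.length := by
    intro a w hw
    have h1 : ((2 * n : ℕ) : ℕ∞) ≤ Γ'.incGraph.egirth := le_of_eq hΓ'.2.symm
    have h2 := SimpleGraph.le_egirth.mp h1 a w hw
    exact_mod_cast h2
  -- Γ' has a cycle
  have hnacyc : ¬ Γ'.incGraph.IsAcyclic := by
    intro hA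
    have hh := hA.egirth_eq_top
    rw [hΓ'.2] at hh
    exact ENat.coe_ne_top (2 * n) hh
  obtain ⟨a₀, w₀, hw₀, -⟩ := SimpleGraph.exists_egirth_eq_length.mpr hnacyc
  obtain ⟨x₀, y₀, z₀, hyz₀, hxy₀, hxz₀⟩ := aux_cycle_two_nbrs hw₀
  -- s' ≥ 1
  have hs' : 1 ≤ s' := by
    by_contra hs
    have hs0 : s' = 0 := by omega
    have hone : ∀ pp : Γ'.P, ∃ a, {l : Γ'.L | Γ'.I pp l} = {a} := fun pp =>
      Set.ncard_eq_one.mp (by rw [hΓ'ord.2 pp, hs0])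
    have hone' : ∀ ll : Γ'.L, ∃ a, {p : Γ'.P | Γ'.I p ll} = {a} := fun ll =>
      Set.ncard_eq_one.mp (by rw [hΓ'ord.1 ll, hs0])
    rcases hxy₀ with ⟨p, l, rfl, rfl, hI⟩ | ⟨p, l, rfl, rfl, hI⟩
    · rcases hxz₀ with ⟨p', l', hx', rfl, hI'⟩ | ⟨p', l', hx', rfl, hI'⟩
      · rw [Sum.inl.injEq] at hx'
        subst hx'
        obtain ⟨w, hwset⟩ := hone p
        have h1 : l ∈ {l : Γ'.L | Γ'.I p l} := hI
        have h2 : l' ∈ {l : Γ'.L | Γ'.I p l} := hI'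
        rw [hwset, Set.mem_singleton_iff] at h1 h2
        exact hyz₀ (by rw [h1, h2])
      · simp at hx'
    · rcases hxz₀ with ⟨p', l', hx', rfl, hI'⟩ | ⟨p', l', hx', rfl, hI'⟩
      · simp at hx'
      · rw [Sum.inr.injEq] at hx'
        subst hx'
        obtain ⟨w, hwset⟩ := hone' l
        have h1 : p ∈ {p : Γ'.P | Γ'.I p l} := hI
        have h2 : p' ∈ {p : Γ'.P | Γ'.I p l} := hI'
        rw [hwset, Set.mem_singleton_iff] at h1 h2
        exact hyz₀ (by rw [h1, h2])
  -- every vertex of Γ' has two distinct neighbours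
  have hdeg : ∀ x : Γ'.P ⊕ Γ'.L, ∃ z₁ z₂, z₁ ≠ z₂ ∧ Γ'.incGraph.Adj x z₁ ∧ Γ'.incGraph.Adj x z₂ := by
    intro x
    cases x with
    | inl p =>
      obtain ⟨l₁, l₂, h₁, h₂, hne⟩ := aux_two_of_ncard (S := {l : Γ'.L | Γ'.I p l}) (m := s' - 1)
        (by rw [hΓ'ord.2 p]; omega)
      exact ⟨Sum.inr l₁, Sum.inr l₂, by simp [hne], Or.inl ⟨p, l₁, rfl, rfl, h₁⟩,
        Or.inl ⟨p, l₂, rfl, rfl, h₂⟩⟩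
    | inr l =>
      obtain ⟨p₁, p₂, h₁, h₂, hne⟩ := aux_two_of_ncard (S := {p : Γ'.P | Γ'.I p l}) (m := s' - 1)
        (by rw [hΓ'ord.1 l]; omega)
      exact ⟨Sum.inl p₁, Sum.inl p₂, by simp [hne], Or.inr ⟨p₁, l, rfl, rfl, h₁⟩,
        Or.inr ⟨p₂, l, rfl, rfl, h₂⟩⟩
  -- short walks in Γ from diameter
  have hGwalk : ∀ x y : Γ.P ⊕ Γ.L, ∃ w : Γ.incGraph.Walk x y, w.length ≤ n := by
    intro x y
    have h1 : Γ.incGraph.edist x y ≤ (n : ℕ∞) := hΓ.1 ▸ SimpleGraph.edist_le_ediam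
    have h2 : Γ.incGraph.edist x y ≠ ⊤ := by
      intro hh
      rw [hh] at h1
      simp at h1
    obtain ⟨w, hw⟩ := Γ.incGraph.exists_walk_of_edist_ne_top h2
    refine ⟨w, ?_⟩
    rw [← hw] at h1
    exact_mod_cast h1
  -- images of a flag's two elements
  have hflag : ∀ (p : Γ.P) (l : Γ.L), Γ.I p l →
      Γ'.incGraph.Adj (γ.fP (Sum.inl p)) (γ.fP (Sum.inr l)) ∨
        γ.fP (Sum.inl p) = γ.fP (Sum.inr l) := by
    intro p l hI
    have h1 := γ.inc (Sum.inl p) ⟨(p, l), hI⟩ (Or.inl rfl)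
    have h2 := γ.inc (Sum.inr l) ⟨(p, l), hI⟩ (Or.inr rfl)
    have hI' : Γ'.I (γ.fL ⟨(p, l), hI⟩).1.1 (γ.fL ⟨(p, l), hI⟩).1.2 := (γ.fL ⟨(p, l), hI⟩).2
    rcases h1 with h1 | h1 <;> rcases h2 with h2 | h2
    · exact Or.inr (h1.trans h2.symm)
    · exact Or.inl (by rw [h1, h2]; exact Or.inl ⟨_, _, rfl, rfl, hI'⟩)
    · exact Or.inl (by rw [h1, h2]; exact Or.inr ⟨_, _, rfl, rfl, hI'⟩)
    · exact Or.inr (h1.trans h2.symm)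
  -- adjacency maps to adjacency-or-equality
  have hmap : ∀ ⦃x y : Γ.P ⊕ Γ.L⦄, Γ.incGraph.Adj x y →
      Γ'.incGraph.Adj (γ.fP x) (γ.fP y) ∨ γ.fP x = γ.fP y := by
    intro x y hxy
    rcases hxy with ⟨p, l, rfl, rfl, hI⟩ | ⟨p, l, rfl, rfl, hI⟩
    · exact hflag p l hI
    · rcases hflag p l hI with h | h
      · exact Or.inl h.symm
      · exact Or.inr h.symm
  -- no collapse of a flag
  have hnocol : ∀ (p : Γ.P) (l : Γ.L), Γ.I p l →
      γ.fP (Sum.inl p) ≠ γ.fP (Sum.inr l) := by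
    intro p l hI heq
    obtain ⟨u, w, hwpath, hwlen⟩ := aux_grow hcyc hdeg (γ.fP (Sum.inl p)) n (by omega)
    obtain ⟨x, hx⟩ := hepi.1 u
    obtain ⟨w1, hw1⟩ := hGwalk x (Sum.inl p)
    obtain ⟨w2, hw2⟩ := hGwalk x (Sum.inr l)
    have hmin : w1.length ≤ n - 1 ∨ w2.length ≤ n - 1 := by
      by_contra hcon
      push_neg at hcon
      obtain ⟨hc1, hc2⟩ := hcon
      have e1 : w1.length = n := by omega
      have e2 : w2.length = n := by omega
      have p1 := aux_parity w1
      have p2 := aux_parity w2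
      rw [e1] at p1
      rw [e2] at p2
      simp only [Sum.isLeft_inl, Sum.isLeft_inr] at p1 p2
      have hbad : (x.isLeft = true) ↔ (x.isLeft = false) := p1.symm.trans p2
      cases hb : x.isLeft <;> simp [hb] at hbad
    have hW : ∃ W : Γ'.incGraph.Walk u (γ.fP (Sum.inl p)), W.length ≤ n - 1 := by
      rcases hmin with hm | hm
      · obtain ⟨W, hWl⟩ := aux_transfer hmap w1
        exact ⟨W.copy hx rfl, (le_of_eq (Walk.length_copy _ _ _)).trans (by omega)⟩
      · obtain ⟨W, hWl⟩ := aux_transfer hmap w2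
        exact ⟨W.copy hx heq.symm, (le_of_eq (Walk.length_copy _ _ _)).trans (by omega)⟩
    obtain ⟨W, hWl⟩ := hW
    have hby : W.reverse.bypass.length ≤ n - 1 :=
      le_trans (Walk.length_bypass_le _) ((Walk.length_reverse _).le.trans hWl)
    have hfin := aux_short_paths_length_eq hcyc (2 * n - 1) w W.reverse.bypass hwpath
      (Walk.bypass_isPath _) (by omega) (by omega)
    omega
  -- coherence of sides along walks
  have hcoh : ∀ {x y : Γ.P ⊕ Γ.L} (w : Γ.incGraph.Walk x y),
      ((γ.fP x).isLeft = x.isLeft ↔ (γ.fP y).isLeft = y.isLeft) := by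
    intro x y w
    induction w with
    | nil => exact Iff.rfl
    | @cons a c b h w ih =>
      have h1 : (γ.fP a).isLeft = !(γ.fP c).isLeft := by
        rcases hmap h with h' | h'
        · exact aux_adj_isLeft h'
        · exfalso
          rcases h with ⟨p, l, rfl, rfl, hI⟩ | ⟨p, l, rfl, rfl, hI⟩
          · exact hnocol p l hI h'
          · exact hnocol p l hI h'.symm
      have h2 : a.isLeft = !c.isLeft := aux_adj_isLeft h
      have h3 : ((!(γ.fP c).isLeft) = (!c.isLeft)) ↔ ((γ.fP c).isLeft = c.isLeft) := by
        cases (γ.fP c).isLeft <;> cases c.isLeft <;> simp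
      rw [h1, h2, h3]
      exact ih
  constructor
  · rintro ⟨p₀, p₀', h₀⟩
    have hsame : ∀ x : Γ.P ⊕ Γ.L, (γ.fP x).isLeft = x.isLeft := by
      intro x
      obtain ⟨w, -⟩ := hGwalk (Sum.inl p₀) x
      exact (hcoh w).mp (by rw [h₀]; rfl)
    have hP : ∀ p : Γ.P, ∃ p', γ.fP (Sum.inl p) = Sum.inl p' := by
      intro p
      have hh := hsame (Sum.inl p)
      cases hg : γ.fP (Sum.inl p) with
      | inl a => exact ⟨a, rfl⟩
      | inr b => rw [hg] at hh; simp at hh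
    have hL : ∀ l : Γ.L, ∃ l', γ.fP (Sum.inr l) = Sum.inr l' := by
      intro l
      have hh := hsame (Sum.inr l)
      cases hg : γ.fP (Sum.inr l) with
      | inl a => rw [hg] at hh; simp at hh
      | inr b => exact ⟨b, rfl⟩
    refine ⟨⟨fun p => (hP p).choose, fun l => (hL l).choose, ?_⟩, ⟨?_, ?_⟩,
      fun p => (hP p).choose_spec, fun l => (hL l).choose_spec⟩
    · intro p l hI
      have hadj : Γ'.incGraph.Adj (γ.fP (Sum.inl p)) (γ.fP (Sum.inr l)) := by
        rcases hflag p l hI with h | h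
        · exact h
        · exact absurd h (hnocol p l hI)
      rw [(hP p).choose_spec, (hL l).choose_spec] at hadj
      rcases hadj with ⟨p', l', h1, h2, hI'⟩ | ⟨p', l', h1, h2, hI'⟩
      · rw [Sum.inl.injEq] at h1
        rw [Sum.inr.injEq] at h2
        show Γ'.I ((hP p).choose) ((hL l).choose)
        rw [h1, h2]
        exact hI'
      · simp at h1
    · intro p'
      obtain ⟨x, hx⟩ := hepi.1 (Sum.inl p')
      cases x with
      | inl pp =>
        exact ⟨pp, (Sum.inl.inj ((hx.symm.trans (hP pp).choose_spec))).symm⟩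
      | inr ll =>
        exact absurd (hx.symm.trans (hL ll).choose_spec) (by simp)
    · intro l'
      obtain ⟨x, hx⟩ := hepi.1 (Sum.inr l')
      cases x with
      | inl pp =>
        exact absurd (hx.symm.trans (hP pp).choose_spec) (by simp)
      | inr ll =>
        exact ⟨ll, (Sum.inr.inj ((hx.symm.trans (hL ll).choose_spec))).symm⟩
  · rintro ⟨p₀, l₀', h₀⟩
    have hflip : ∀ x : Γ.P ⊕ Γ.L, (γ.fP x).isLeft = !x.isLeft := by
      intro x
      obtain ⟨w, -⟩ := hGwalk (Sum.inl p₀) x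
      have hnot : ¬ ((γ.fP x).isLeft = x.isLeft) := by
        intro hcontra
        have hh := (hcoh w).mpr hcontra
        rw [h₀] at hh
        simp at hh
      cases hb : x.isLeft <;> cases hg : (γ.fP x).isLeft <;> simp_all
    have hP : ∀ p : Γ.P, ∃ l', γ.fP (Sum.inl p) = Sum.inr l' := by
      intro p
      have hh := hflip (Sum.inl p)
      cases hg : γ.fP (Sum.inl p) with
      | inl a => rw [hg] at hh; simp at hh
      | inr b => exact ⟨b, rfl⟩
    have hL : ∀ l : Γ.L, ∃ p', γ.fP (Sum.inr l) = Sum.inl p' := by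
      intro l
      have hh := hflip (Sum.inr l)
      cases hg : γ.fP (Sum.inr l) with
      | inl a => exact ⟨a, rfl⟩
      | inr b => rw [hg] at hh; simp at hh
    refine ⟨⟨fun p => (hP p).choose, fun l => (hL l).choose, ?_⟩, ⟨?_, ?_⟩,
      fun p => (hP p).choose_spec, fun l => (hL l).choose_spec⟩
    · intro p l hI
      have hadj : Γ'.incGraph.Adj (γ.fP (Sum.inl p)) (γ.fP (Sum.inr l)) := by
        rcases hflag p l hI with h | h
        · exact h
        · exact absurd h (hnocol p l hI)
      rw [(hP p).choose_spec, (hL l).choose_spec] at hadj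
      rcases hadj with ⟨p', l', h1, h2, hI'⟩ | ⟨p', l', h1, h2, hI'⟩
      · simp at h1
      · rw [Sum.inr.injEq] at h1
        rw [Sum.inl.injEq] at h2
        show Γ'.I ((hL l).choose) ((hP p).choose)
        rw [h1, h2]
        exact hI'
    · intro l'
      obtain ⟨x, hx⟩ := hepi.1 (Sum.inr l')
      cases x with
      | inl pp =>
        exact ⟨pp, (Sum.inr.inj ((hx.symm.trans (hP pp).choose_spec))).symm⟩
      | inr ll =>
        exact absurd (hx.symm.trans (hL ll).choose_spec) (by simp)
    · intro p'
      obtain ⟨x, hx⟩ := hepi.1 (Sum.inl p')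
      cases x with
      | inl pp =>
        exact absurd (hx.symm.trans (hP pp).choose_spec) (by simp)
      | inr ll =>
        exact ⟨ll, (Sum.inl.inj ((hx.symm.trans (hL ll).choose_spec))).symm⟩
end Aux
end

section
/- Let S' be a geometrical hyperplane of a finite thick generalized quadrangle S of order (s,t). Then S' is one of exactly three types: (A) an ovoid of S (a set of points meeting every line in exactly one point, with no lines); (B) the perp x^⊥ of a point x (all points collinear with or equal to x, with the lines through x); or (C) a subquadrangle of S of order (s, t/s). -/
namespace IncGeom

/-- H is a geometrical hyperplane: every line of G meets H in exactly one point or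
lies entirely inside H, and H is a proper subset. -/
def IsGeomHyperplane (G : IncGeom) (H : Set G.P) : Prop :=
  H ≠ Set.univ ∧
    ∀ l : G.L, (∃! p : G.P, p ∈ H ∧ G.I p l) ∨ (∀ p : G.P, G.I p l → p ∈ H)

/-- The perp of a point: all points collinear with (or equal to) it. -/
def perp (G : IncGeom) (x : G.P) : Set G.P := {y | G.Collin x y}

end IncGeom

open Set in
lemma myncard_biUnion {α β : Type} [Finite α] [Finite β] (I : Set α) (f : α → Set β) (k : ℕ)
    (hdisj : ∀ a ∈ I, ∀ b ∈ I, a ≠ b → ∀ x, x ∈ f a → x ∈ f b → False)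
    (hsize : ∀ a ∈ I, (f a).ncard = k) :
    (⋃ a ∈ I, f a).ncard = I.ncard * k := by
  classical
  have := Fintype.ofFinite α
  have := Fintype.ofFinite β
  have h1 : (⋃ a ∈ I, f a) = ↑(I.toFinset.biUnion fun a => (f a).toFinset) := by
    ext x; simp
  rw [h1, ncard_coe_finset, Finset.card_biUnion]
  · rw [Finset.sum_congr rfl (fun a ha => ?_), Finset.sum_const, smul_eq_mul,
      ← ncard_eq_toFinset_card' I]
    rw [← hsize a (by simpa using ha), ncard_eq_toFinset_card']
  · intro a ha b hb hab
    simp only [Finset.disjoint_left, Set.mem_toFinset]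
    intro x hx hx'
    exact hdisj a (by simpa using ha) b (by simpa using hb) hab x hx hx'


/-- A geometrical hyperplane of a finite thick generalized quadrangle of order (s,t)
is an ovoid, the perp of a point, or a subquadrangle of order (s, t/s). -/
theorem stmt_18 (S : IncGeom) (s t : ℕ) (hs : 2 ≤ s) (ht : 2 ≤ t)
    (hfinP : Finite S.P) (hfinL : Finite S.L)
    (hS : S.IsGQ) (hSthick : S.Thick) (hSord : S.HasOrder s t)
    (H : Set S.P) (hH : S.IsGeomHyperplane H) :
    (∀ l : S.L, ∃! p : S.P, p ∈ H ∧ S.I p l) ∨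
    (∃ x : S.P, H = S.perp x) ∨
    (∃ t' : ℕ, t = s * t' ∧
      (S.restrict H {l | ∀ p : S.P, S.I p l → p ∈ H}).IsGQ ∧
      (S.restrict H {l | ∀ p : S.P, S.I p l → p ∈ H}).HasOrder s t') := by
  classical
  obtain ⟨hax1, hax2⟩ := hS
  obtain ⟨hHne, hHl⟩ := hH
  -- a line with two distinct points of H is full
  have htwo : ∀ (l : S.L) (p q : S.P), p ∈ H → q ∈ H → p ≠ q → S.I p l → S.I q l →
      ∀ r, S.I r l → r ∈ H := by
    intro l p q hp hq hpq hpl hql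
    rcases hHl l with h | h
    · exact absurd (h.unique ⟨hp, hpl⟩ ⟨hq, hql⟩) hpq
    · exact h
  -- a line through a point outside H has a unique point of H
  have hnonfull : ∀ (l : S.L) (z : S.P), S.I z l → z ∉ H → ∃! p, p ∈ H ∧ S.I p l := by
    intro l z hzl hz
    rcases hHl l with h | h
    · exact h
    · exact absurd (h z hzl) hz
  have hzex : ∃ z, z ∉ H := by
    rw [Set.ne_univ_iff_exists_notMem] at hHne; exact hHne
  have hcollin_self : ∀ p, S.Collin p p := by
    intro p
    obtain ⟨l₁, _, _, _, _, _, h, _, _⟩ := hSthick.1 p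
    exact ⟨l₁, h, h⟩
  -- the perp trace of an external point on H has t+1 points
  have hO1 : ∀ z ∉ H, {p | p ∈ H ∧ S.Collin z p}.ncard = t + 1 := by
    intro z hz
    have hch : ∀ l : S.L, ∃ p, S.I z l → (p ∈ H ∧ S.I p l) := by
      intro l
      by_cases h : S.I z l
      · obtain ⟨p, hp, _⟩ := hnonfull l z h hz
        exact ⟨p, fun _ => hp⟩
      · exact ⟨z, fun h' => absurd h' h⟩
    choose f hf using hch
    have himg : f '' {l | S.I z l} = {p | p ∈ H ∧ S.Collin z p} := by
      ext p
      constructor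
      · rintro ⟨l, hl, rfl⟩
        exact ⟨(hf l hl).1, ⟨l, hl, (hf l hl).2⟩⟩
      · rintro ⟨hp, l, hzl, hpl⟩
        exact ⟨l, hzl, ((hnonfull l z hzl hz).unique ⟨hp, hpl⟩ ⟨(hf l hzl).1, (hf l hzl).2⟩).symm⟩
    have hinj : Set.InjOn f {l | S.I z l} := by
      intro l₁ h₁ l₂ h₂ heq
      have hp₁ := hf l₁ h₁
      have hp₂ := hf l₂ h₂
      have hpz : f l₁ ≠ z := fun h => hz (h ▸ hp₁.1)
      exact hax1 (f l₁) z hpz l₁ l₂ hp₁.2 h₁ (heq ▸ hp₂.2) h₂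
    rw [← himg, Set.ncard_image_of_injOn hinj, hSord.2 z]
  by_cases hfull : ∃ l : S.L, ∀ p, S.I p l → p ∈ H
  swap
  · -- ovoid case
    left
    intro l
    rcases hHl l with h | h
    · exact h
    · exact absurd ⟨l, h⟩ hfull
  -- every point of H lies on a full line
  have honfull : ∀ p ∈ H, ∃ l, (∀ q, S.I q l → q ∈ H) ∧ S.I p l := by
    intro p hp
    obtain ⟨l₀, hl₀⟩ := hfull
    by_cases hpl : S.I p l₀
    · exact ⟨l₀, hl₀, hpl⟩
    · obtain ⟨q, ⟨hql, m, hpm, hqm⟩, -⟩ := hax2 p l₀ hpl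
      have hqH : q ∈ H := hl₀ q hql
      have hpq : p ≠ q := fun h => hpl (h ▸ hql)
      exact ⟨m, htwo m p q hp hqH hpq hpm hqm, hpm⟩
  by_cases hdisj : ∃ l₁ l₂ : S.L, (∀ p, S.I p l₁ → p ∈ H) ∧ (∀ p, S.I p l₂ → p ∈ H) ∧
      ∀ p, ¬(S.I p l₁ ∧ S.I p l₂)
  · -- subquadrangle case
    right; right
    obtain ⟨d₁, d₂, hd₁, hd₂, hdd⟩ := hdisj
    -- comparison of numbers of full lines through two points sharing no full line
    have hnb_le : ∀ p q : S.P, p ∈ H → q ∈ H → p ≠ q →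
        (∀ l, (∀ r, S.I r l → r ∈ H) → S.I p l → S.I q l → False) →
        {l : S.L | (∀ r, S.I r l → r ∈ H) ∧ S.I p l}.ncard ≤
        {l : S.L | (∀ r, S.I r l → r ∈ H) ∧ S.I q l}.ncard := by
      intro p q hpH hqH hpq hcon
      have hch : ∀ l : S.L, ∃ m r, ((∀ u, S.I u l → u ∈ H) ∧ S.I p l) →
          ((∀ u, S.I u m → u ∈ H) ∧ S.I q m ∧ S.I r l ∧ S.I r m ∧ r ≠ p) := by
        intro l
        by_cases hl : (∀ u, S.I u l → u ∈ H) ∧ S.I p l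
        · have hql : ¬ S.I q l := fun h => hcon l hl.1 hl.2 h
          obtain ⟨r, ⟨hrl, m, hqm, hrm⟩, -⟩ := hax2 q l hql
          have hrH : r ∈ H := hl.1 r hrl
          have hrq : r ≠ q := fun h => hql (h ▸ hrl)
          have hmf : ∀ u, S.I u m → u ∈ H := htwo m q r hqH hrH (Ne.symm hrq) hqm hrm
          have hrp : r ≠ p := by
            intro h
            subst h
            exact hcon m hmf hrm hqm
          exact ⟨m, r, fun _ => ⟨hmf, hqm, hrl, hrm, hrp⟩⟩
        · exact ⟨l, p, fun h => absurd h hl⟩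
      choose f g hf using hch
      refine Set.ncard_le_ncard_of_injOn f (fun l hl => ⟨(hf l hl).1, (hf l hl).2.1⟩) ?_
        (Set.toFinite _)
      intro l₁ h₁ l₂ h₂ heq
      obtain ⟨hm₁f, hqm₁, hr₁l, hr₁m, hr₁p⟩ := hf l₁ h₁
      obtain ⟨hm₂f, hqm₂, hr₂l, hr₂m, hr₂p⟩ := hf l₂ h₂
      have hpm : ¬ S.I p (f l₁) := fun h => hcon (f l₁) hm₁f h hqm₁
      obtain ⟨cc, -, hcu⟩ := hax2 p (f l₁) hpm
      have e₁ : g l₁ = cc := hcu (g l₁) ⟨hr₁m, ⟨l₁, h₁.2, hr₁l⟩⟩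
      have e₂ : g l₂ = cc := hcu (g l₂) ⟨heq ▸ hr₂m, ⟨l₂, h₂.2, hr₂l⟩⟩
      have hgg : g l₁ = g l₂ := e₁.trans e₂.symm
      exact hax1 p (g l₁) (Ne.symm hr₁p) l₁ l₂ h₁.2 hr₁l h₂.2 (hgg ▸ hr₂l)
    have hnb : ∀ p q : S.P, p ∈ H → q ∈ H → p ≠ q →
        (∀ l, (∀ r, S.I r l → r ∈ H) → S.I p l → S.I q l → False) →
        {l : S.L | (∀ r, S.I r l → r ∈ H) ∧ S.I p l}.ncard =
        {l : S.L | (∀ r, S.I r l → r ∈ H) ∧ S.I q l}.ncard := by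
      intro p q hpH hqH hpq hcon
      exact le_antisymm (hnb_le p q hpH hqH hpq hcon)
        (hnb_le q p hqH hpH (Ne.symm hpq) (fun l hlf hql hpl => hcon l hlf hpl hql))
    -- a point of H all of whose lines are full is impossible
    have hallfull_imp : ∀ p ∈ H, (∀ l, S.I p l → ∀ u, S.I u l → u ∈ H) → False := by
      intro p hpH hp
      -- a full line not through p
      obtain ⟨ℓ, hℓf, hpℓ⟩ : ∃ ℓ, (∀ u, S.I u ℓ → u ∈ H) ∧ ¬ S.I p ℓ := by
        by_cases h : S.I p d₁
        · exact ⟨d₂, hd₂, fun h' => hdd p ⟨h, h'⟩⟩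
        · exact ⟨d₁, hd₁, h⟩
      obtain ⟨q, ⟨hqℓ, hq_col⟩, hqu⟩ := hax2 p ℓ hpℓ
      -- n p = t + 1
      have hnp : {l : S.L | (∀ r, S.I r l → r ∈ H) ∧ S.I p l}.ncard = t + 1 := by
        have : {l : S.L | (∀ r, S.I r l → r ∈ H) ∧ S.I p l} = {l : S.L | S.I p l} := by
          ext l
          exact ⟨fun h => h.2, fun h => ⟨hp l h, h⟩⟩
        rw [this, hSord.2 p]
      -- every point of ℓ other than q has all its lines full
      have hA : ∀ r, S.I r ℓ → r ≠ q → ∀ l, S.I r l → ∀ u, S.I u l → u ∈ H := by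
        intro r hrℓ hrq
        have hrH : r ∈ H := hℓf r hrℓ
        have hrp : r ≠ p := fun h => hpℓ (h ▸ hrℓ)
        have hncol : ∀ l, S.I p l → S.I r l → False := by
          intro l hpl hrl
          exact hrq (hqu r ⟨hrℓ, ⟨l, hpl, hrl⟩⟩)
        have hnr : {l : S.L | (∀ u, S.I u l → u ∈ H) ∧ S.I r l}.ncard = t + 1 := by
          rw [← hnp]
          exact (hnb p r hpH hrH (Ne.symm hrp) (fun l _ hpl hrl => hncol l hpl hrl)).symm
        have hsub : {l : S.L | (∀ u, S.I u l → u ∈ H) ∧ S.I r l} ⊆ {l : S.L | S.I r l} :=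
          fun l h => h.2
        have heq := Set.eq_of_subset_of_ncard_le hsub
          (by rw [hSord.2 r, hnr]) (Set.toFinite _)
        intro l hrl
        have : l ∈ {l : S.L | (∀ u, S.I u l → u ∈ H) ∧ S.I r l} := heq ▸ hrl
        exact this.1
      -- every point outside H is collinear with q
      have hkey : ∀ z, z ∉ H → S.Collin z q := by
        intro z hz
        have hzℓ : ¬ S.I z ℓ := fun h => hz (hℓf z h)
        obtain ⟨o, ⟨hoℓ, hz_col⟩, -⟩ := hax2 z ℓ hzℓ
        by_cases hoq : o = q
        · exact hoq ▸ hz_col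
        · exfalso
          obtain ⟨l, hzl, hol⟩ := hz_col
          exact hz (hA o hoℓ hoq l hol z hzl)
      obtain ⟨z₁, hz₁⟩ := hzex
      obtain ⟨m, hz₁m, hqm⟩ := hkey z₁ hz₁
      -- a second line through z₁
      obtain ⟨n₁, n₂, n₃, hn12, _, _, hzn₁, hzn₂, _⟩ := hSthick.1 z₁
      obtain ⟨m', hz₁m', hm'm⟩ : ∃ m', S.I z₁ m' ∧ m' ≠ m := by
        by_cases h : n₁ = m
        · exact ⟨n₂, hzn₂, fun h' => hn12 (h.symm ▸ h' ▸ rfl)⟩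
        · exact ⟨n₁, hzn₁, h⟩
      have hz₁q : z₁ ≠ q := fun h => hz₁ (h ▸ hℓf q hqℓ)
      have hqm' : ¬ S.I q m' := fun h => hm'm (hax1 z₁ q hz₁q m' m hz₁m' h hz₁m hqm)
      obtain ⟨h₀, -, h₀u⟩ := hnonfull m' z₁ hz₁m' hz₁
      have h2 : 1 < ({p' | S.I p' m'} \ {h₀}).ncard := by
        by_cases hmem : h₀ ∈ {p' | S.I p' m'}
        · rw [Set.ncard_diff_singleton_of_mem hmem, hSord.1 m']
          omega
        · rw [Set.diff_singleton_eq_self hmem, hSord.1 m']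
          omega
      obtain ⟨a, b, ha, hb, hab⟩ := (Set.one_lt_ncard_iff (Set.toFinite _)).mp h2
      have haH : a ∉ H := fun h => ha.2 (h₀u a ⟨h, ha.1⟩)
      have hbH : b ∉ H := fun h => hb.2 (h₀u b ⟨h, hb.1⟩)
      obtain ⟨la, hala, hqla⟩ := hkey a haH
      obtain ⟨lb, hblb, hqlb⟩ := hkey b hbH
      obtain ⟨cc, -, hcu⟩ := hax2 q m' hqm'
      have e₁ : a = cc := hcu a ⟨ha.1, ⟨la, hqla, hala⟩⟩
      have e₂ : b = cc := hcu b ⟨hb.1, ⟨lb, hqlb, hblb⟩⟩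
      exact hab (e₁.trans e₂.symm)
    -- every point of H lies on at most t full lines
    have hle_t : ∀ p ∈ H, {l : S.L | (∀ r, S.I r l → r ∈ H) ∧ S.I p l}.ncard ≤ t := by
      intro p hpH
      have hsub : {l : S.L | (∀ r, S.I r l → r ∈ H) ∧ S.I p l} ⊆ {l : S.L | S.I p l} :=
        fun l h => h.2
      have hle : {l : S.L | (∀ r, S.I r l → r ∈ H) ∧ S.I p l}.ncard ≤ t + 1 := by
        rw [← hSord.2 p]
        exact Set.ncard_le_ncard hsub (Set.toFinite _)
      rcases Nat.lt_or_ge ({l : S.L | (∀ r, S.I r l → r ∈ H) ∧ S.I p l}.ncard) (t+1) with h | h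
      · omega
      · exfalso
        have heq := Set.eq_of_subset_of_ncard_le hsub
          (by rw [hSord.2 p]; exact h) (Set.toFinite _)
        apply hallfull_imp p hpH
        intro l hpl
        have hmem : l ∈ {l : S.L | (∀ r, S.I r l → r ∈ H) ∧ S.I p l} := heq ▸ hpl
        exact fun u hu => hmem.1 u hu
    obtain ⟨z₀, hz₀⟩ := hzex
    have hOcard : {p | p ∈ H ∧ S.Collin z₀ p}.ncard = t + 1 := hO1 z₀ hz₀
    have hOne : {p | p ∈ H ∧ S.Collin z₀ p}.Nonempty :=
      Set.nonempty_of_ncard_ne_zero (by rw [hOcard]; omega)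
    obtain ⟨q₀, hq₀⟩ := hOne
    have hO3 : ∀ o₁ ∈ {p | p ∈ H ∧ S.Collin z₀ p}, ∀ o₂ ∈ {p | p ∈ H ∧ S.Collin z₀ p},
        o₁ ≠ o₂ → ∀ m, (∀ r, S.I r m → r ∈ H) → S.I o₁ m → S.I o₂ m → False := by
      intro o₁ h₁ o₂ h₂ hne m hmf h₁m h₂m
      have hzm : ¬ S.I z₀ m := fun h => hz₀ (hmf z₀ h)
      obtain ⟨r, -, hru⟩ := hax2 z₀ m hzm
      exact hne ((hru o₁ ⟨h₁m, h₁.2⟩).trans (hru o₂ ⟨h₂m, h₂.2⟩).symm)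
    have hnbO : ∀ o ∈ {p | p ∈ H ∧ S.Collin z₀ p},
        {l : S.L | (∀ r, S.I r l → r ∈ H) ∧ S.I o l}.ncard =
        {l : S.L | (∀ r, S.I r l → r ∈ H) ∧ S.I q₀ l}.ncard := by
      intro o hoO
      by_cases hoq : o = q₀
      · rw [hoq]
      · exact hnb o q₀ hoO.1 hq₀.1 hoq (fun l hlf hol hql =>
          hO3 o hoO q₀ hq₀ hoq l hlf hol hql)
    have hconst : ∀ p ∈ H, {l : S.L | (∀ r, S.I r l → r ∈ H) ∧ S.I p l}.ncard =
        {l : S.L | (∀ r, S.I r l → r ∈ H) ∧ S.I q₀ l}.ncard := by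
      intro p hpH
      by_cases hpO : p ∈ {p | p ∈ H ∧ S.Collin z₀ p}
      · exact hnbO p hpO
      · have hch : ∀ o : S.P, ∃ m, (o ∈ {p | p ∈ H ∧ S.Collin z₀ p} ∧
            ∃ m', (∀ r, S.I r m' → r ∈ H) ∧ S.I p m' ∧ S.I o m') →
            ((∀ r, S.I r m → r ∈ H) ∧ S.I p m ∧ S.I o m) := by
          intro o
          by_cases h : o ∈ {p | p ∈ H ∧ S.Collin z₀ p} ∧
            ∃ m', (∀ r, S.I r m' → r ∈ H) ∧ S.I p m' ∧ S.I o m'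
          · exact ⟨h.2.choose, fun _ => h.2.choose_spec⟩
          · exact ⟨d₁, fun h' => absurd h' h⟩
        choose f hfA using hch
        have hAcard : {o | o ∈ {p | p ∈ H ∧ S.Collin z₀ p} ∧
            ∃ m', (∀ r, S.I r m' → r ∈ H) ∧ S.I p m' ∧ S.I o m'}.ncard ≤
            {l : S.L | (∀ r, S.I r l → r ∈ H) ∧ S.I p l}.ncard := by
          refine Set.ncard_le_ncard_of_injOn f
            (fun o ho => ⟨(hfA o ho).1, (hfA o ho).2.1⟩) ?_ (Set.toFinite _)
          intro o₁ h₁ o₂ h₂ heq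
          by_contra hne
          exact hO3 o₁ h₁.1 o₂ h₂.1 hne (f o₁) (hfA o₁ h₁).1 (hfA o₁ h₁).2.2
            (heq ▸ (hfA o₂ h₂).2.2)
        have hlt : {o | o ∈ {p | p ∈ H ∧ S.Collin z₀ p} ∧
            ∃ m', (∀ r, S.I r m' → r ∈ H) ∧ S.I p m' ∧ S.I o m'}.ncard <
            {p | p ∈ H ∧ S.Collin z₀ p}.ncard := by
          have := hle_t p hpH
          rw [hOcard]
          omega
        obtain ⟨o, hoO, hoA⟩ := Set.exists_mem_notMem_of_ncard_lt_ncard hlt (Set.toFinite _)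
        have hop : p ≠ o := fun h => hpO (h ▸ hoO)
        have hnol : ∀ l, (∀ r, S.I r l → r ∈ H) → S.I p l → S.I o l → False :=
          fun l hlf hpl hol => hoA ⟨hoO, l, hlf, hpl, hol⟩
        rw [hnb p o hpH hoO.1 hop hnol]
        exact hnbO o hoO
    set c := {l : S.L | (∀ r, S.I r l → r ∈ H) ∧ S.I q₀ l}.ncard with hcdef
    have hc1 : 1 ≤ c := by
      obtain ⟨l, hlf, hql⟩ := honfull q₀ hq₀.1
      have hmem : l ∈ {l : S.L | (∀ r, S.I r l → r ∈ H) ∧ S.I q₀ l} := ⟨hlf, hql⟩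
      have hpos := (Set.ncard_pos (Set.toFinite _)).mpr ⟨l, hmem⟩
      omega
    have hcount1 : H.ncard = (s+1) + (s+1)*((c-1)*s) := by
      have hcover : H = {p : S.P | S.I p d₁} ∪
          ⋃ q ∈ {p : S.P | S.I p d₁}, {p | p ∈ H ∧ ¬ S.I p d₁ ∧ S.Collin p q} := by
        ext p
        constructor
        · intro hp
          by_cases h : S.I p d₁
          · exact Or.inl h
          · obtain ⟨q, ⟨hql, hcol⟩, -⟩ := hax2 p d₁ h
            exact Or.inr (Set.mem_biUnion hql ⟨hp, h, hcol⟩)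
        · rintro (h | h)
          · exact hd₁ p h
          · simp only [Set.mem_iUnion] at h
            obtain ⟨q, hq, hpF⟩ := h
            exact hpF.1
      have hdisj2 : Disjoint {p : S.P | S.I p d₁}
          (⋃ q ∈ {p : S.P | S.I p d₁}, {p | p ∈ H ∧ ¬ S.I p d₁ ∧ S.Collin p q}) := by
        rw [Set.disjoint_left]
        intro p hp hpu
        simp only [Set.mem_iUnion] at hpu
        obtain ⟨q, hq, hpF⟩ := hpu
        exact hpF.2.1 hp
      have hFcard : ∀ q ∈ {p : S.P | S.I p d₁},
          {p | p ∈ H ∧ ¬ S.I p d₁ ∧ S.Collin p q}.ncard = (c-1)*s := by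
        intro q hq
        have hqH : q ∈ H := hd₁ q hq
        have hFeq : {p | p ∈ H ∧ ¬ S.I p d₁ ∧ S.Collin p q} =
            ⋃ m ∈ {m : S.L | ((∀ u, S.I u m → u ∈ H) ∧ S.I q m) ∧ m ≠ d₁},
              ({p | S.I p m} \ {q}) := by
          ext p
          simp only [Set.mem_iUnion, Set.mem_diff, Set.mem_setOf_eq, Set.mem_singleton_iff]
          constructor
          · rintro ⟨hpH, hpd, m, hpm, hqm⟩
            have hpq : p ≠ q := fun h => hpd (h ▸ hq)
            have hmf := htwo m p q hpH hqH hpq hpm hqm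
            have hmd : m ≠ d₁ := fun h => hpd (h ▸ hpm)
            exact ⟨m, ⟨⟨hmf, hqm⟩, hmd⟩, hpm, hpq⟩
          · rintro ⟨m, ⟨⟨hmf, hqm⟩, hmd⟩, hpm, hpq⟩
            exact ⟨hmf p hpm, fun hpd => hmd (hax1 p q hpq m d₁ hpm hqm hpd hq),
              ⟨m, hpm, hqm⟩⟩
        have hd : ∀ m₁ ∈ {m : S.L | ((∀ u, S.I u m → u ∈ H) ∧ S.I q m) ∧ m ≠ d₁},
            ∀ m₂ ∈ {m : S.L | ((∀ u, S.I u m → u ∈ H) ∧ S.I q m) ∧ m ≠ d₁},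
            m₁ ≠ m₂ → ∀ x, x ∈ {p | S.I p m₁} \ {q} → x ∈ {p | S.I p m₂} \ {q} → False := by
          intro m₁ hm₁ m₂ hm₂ hne x hx₁ hx₂
          exact hne (hax1 x q hx₁.2 m₁ m₂ hx₁.1 hm₁.1.2 hx₂.1 hm₂.1.2)
        have hsz : ∀ m ∈ {m : S.L | ((∀ u, S.I u m → u ∈ H) ∧ S.I q m) ∧ m ≠ d₁},
            ({p | S.I p m} \ {q}).ncard = s := by
          intro m hm
          rw [Set.ncard_diff_singleton_of_mem (show q ∈ {p : S.P | S.I p m} from hm.1.2), hSord.1 m]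
          omega
        have hidx : {m : S.L | ((∀ u, S.I u m → u ∈ H) ∧ S.I q m) ∧ m ≠ d₁}.ncard = c - 1 := by
          have he : {m : S.L | ((∀ u, S.I u m → u ∈ H) ∧ S.I q m) ∧ m ≠ d₁} =
              {m : S.L | (∀ u, S.I u m → u ∈ H) ∧ S.I q m} \ {d₁} := rfl
          rw [he, Set.ncard_diff_singleton_of_mem (show d₁ ∈ {m : S.L | (∀ u, S.I u m → u ∈ H) ∧ S.I q m} from ⟨hd₁, hq⟩), hconst q hqH]
        rw [hFeq, myncard_biUnion _ _ s hd hsz, hidx]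
      rw [hcover, Set.ncard_union_eq hdisj2 (Set.toFinite _) (Set.toFinite _),
        myncard_biUnion _ _ ((c-1)*s) ?_ hFcard, hSord.1 d₁]
      intro q₁ h₁ q₂ h₂ hne p hp₁ hp₂
      obtain ⟨r, -, hru⟩ := hax2 p d₁ hp₁.2.1
      exact hne ((hru q₁ ⟨h₁, hp₁.2.2⟩).trans (hru q₂ ⟨h₂, hp₂.2.2⟩).symm)
    -- second count of H using a non-full line through z₀
    obtain ⟨m₀, m₀', m₀'', _, _, _, hzm₀, _, _⟩ := hSthick.1 z₀
    obtain ⟨w, ⟨hwH, hwm₀⟩, hwu⟩ := hnonfull m₀ z₀ hzm₀ hz₀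
    have hcount2 : H.ncard = 1 + (c*s + s*t) := by
      have hcover : H = insert w
          (({p | p ∈ H ∧ ¬ S.I p m₀ ∧ S.Collin p w}) ∪
            ⋃ q ∈ ({p : S.P | S.I p m₀} \ {w}), {p | p ∈ H ∧ ¬ S.I p m₀ ∧ S.Collin p q}) := by
        ext p
        constructor
        · intro hp
          by_cases h : S.I p m₀
          · exact Or.inl (hwu p ⟨hp, h⟩)
          · obtain ⟨q, ⟨hql, hcol⟩, -⟩ := hax2 p m₀ h
            by_cases hqw : q = w
            · exact Or.inr (Or.inl ⟨hp, h, hqw ▸ hcol⟩)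
            · exact Or.inr (Or.inr (Set.mem_biUnion ⟨hql, hqw⟩ ⟨hp, h, hcol⟩))
        · rintro (rfl | h | h)
          · exact hwH
          · exact h.1
          · simp only [Set.mem_iUnion] at h
            obtain ⟨q, hq, hpF⟩ := h
            exact hpF.1
      have hwnot : w ∉ ({p | p ∈ H ∧ ¬ S.I p m₀ ∧ S.Collin p w}) ∪
          ⋃ q ∈ ({p : S.P | S.I p m₀} \ {w}), {p | p ∈ H ∧ ¬ S.I p m₀ ∧ S.Collin p q} := by
        rintro (h | h)
        · exact h.2.1 hwm₀
        · simp only [Set.mem_iUnion] at h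
          obtain ⟨q, hq, hpF⟩ := h
          exact hpF.2.1 hwm₀
      have hdisjGw : Disjoint ({p | p ∈ H ∧ ¬ S.I p m₀ ∧ S.Collin p w})
          (⋃ q ∈ ({p : S.P | S.I p m₀} \ {w}), {p | p ∈ H ∧ ¬ S.I p m₀ ∧ S.Collin p q}) := by
        rw [Set.disjoint_left]
        intro p hp hpu
        simp only [Set.mem_iUnion] at hpu
        obtain ⟨q, hq, hpF⟩ := hpu
        obtain ⟨r, -, hru⟩ := hax2 p m₀ hp.2.1
        have heqw : q = w := (hru q ⟨hq.1, hpF.2.2⟩).trans (hru w ⟨hwm₀, hp.2.2⟩).symm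
        exact hq.2 heqw
      -- card of the w-fiber
      have hGw : {p | p ∈ H ∧ ¬ S.I p m₀ ∧ S.Collin p w}.ncard = c*s := by
        have hGeq : {p | p ∈ H ∧ ¬ S.I p m₀ ∧ S.Collin p w} =
            ⋃ m ∈ {m : S.L | (∀ u, S.I u m → u ∈ H) ∧ S.I w m},
              ({p | S.I p m} \ {w}) := by
          ext p
          simp only [Set.mem_iUnion, Set.mem_diff, Set.mem_setOf_eq, Set.mem_singleton_iff]
          constructor
          · rintro ⟨hpH, hpm₀, m, hpm, hwm⟩
            have hpw : p ≠ w := fun h => hpm₀ (h ▸ hwm₀)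
            have hmf := htwo m p w hpH hwH hpw hpm hwm
            exact ⟨m, ⟨hmf, hwm⟩, hpm, hpw⟩
          · rintro ⟨m, ⟨hmf, hwm⟩, hpm, hpw⟩
            refine ⟨hmf p hpm, fun hpm₀ => hpw (hwu p ⟨hmf p hpm, hpm₀⟩), ⟨m, hpm, hwm⟩⟩
        have hd : ∀ m₁ ∈ {m : S.L | (∀ u, S.I u m → u ∈ H) ∧ S.I w m},
            ∀ m₂ ∈ {m : S.L | (∀ u, S.I u m → u ∈ H) ∧ S.I w m},
            m₁ ≠ m₂ → ∀ x, x ∈ {p | S.I p m₁} \ {w} → x ∈ {p | S.I p m₂} \ {w} → False := by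
          intro m₁ hm₁ m₂ hm₂ hne x hx₁ hx₂
          exact hne (hax1 x w hx₁.2 m₁ m₂ hx₁.1 hm₁.2 hx₂.1 hm₂.2)
        have hsz : ∀ m ∈ {m : S.L | (∀ u, S.I u m → u ∈ H) ∧ S.I w m},
            ({p | S.I p m} \ {w}).ncard = s := by
          intro m hm
          rw [Set.ncard_diff_singleton_of_mem (show w ∈ {p : S.P | S.I p m} from hm.2), hSord.1 m]
          omega
        rw [hGeq, myncard_biUnion _ _ s hd hsz, hconst w hwH]
      -- card of the other fibers
      have hGq : ∀ q ∈ ({p : S.P | S.I p m₀} \ {w}),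
          {p | p ∈ H ∧ ¬ S.I p m₀ ∧ S.Collin p q}.ncard = t := by
        intro q hq
        have hqH : q ∉ H := fun h => hq.2 (hwu q ⟨h, hq.1⟩)
        have hGeq : {p | p ∈ H ∧ ¬ S.I p m₀ ∧ S.Collin p q} =
            {p | p ∈ H ∧ S.Collin q p} \ {w} := by
          ext p
          simp only [Set.mem_diff, Set.mem_setOf_eq, Set.mem_singleton_iff]
          constructor
          · rintro ⟨hpH, hpm₀, m, hpm, hqm⟩
            exact ⟨⟨hpH, ⟨m, hqm, hpm⟩⟩, fun h => hpm₀ (h ▸ hwm₀)⟩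
          · rintro ⟨⟨hpH, m, hqm, hpm⟩, hpw⟩
            refine ⟨hpH, fun hpm₀ => hpw (hwu p ⟨hpH, hpm₀⟩), ⟨m, hpm, hqm⟩⟩
        rw [hGeq, Set.ncard_diff_singleton_of_mem
          (show w ∈ {p | p ∈ H ∧ S.Collin q p} from ⟨hwH, ⟨m₀, hq.1, hwm₀⟩⟩), hO1 q hqH]
        omega
      have hm₀card : ({p : S.P | S.I p m₀} \ {w}).ncard = s := by
        rw [Set.ncard_diff_singleton_of_mem (show w ∈ {p : S.P | S.I p m₀} from hwm₀), hSord.1 m₀]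
        omega
      rw [hcover, Set.ncard_insert_of_notMem hwnot (Set.toFinite _),
        Set.ncard_union_eq hdisjGw (Set.toFinite _) (Set.toFinite _), hGw,
        myncard_biUnion _ _ t ?_ hGq, hm₀card]
      · omega
      intro q₁ h₁ q₂ h₂ hne p hp₁ hp₂
      obtain ⟨r, -, hru⟩ := hax2 p m₀ hp₁.2.1
      exact hne ((hru q₁ ⟨h₁.1, hp₁.2.2⟩).trans (hru q₂ ⟨h₂.1, hp₂.2.2⟩).symm)
    -- arithmetic: t = s * t'
    obtain ⟨t', hct⟩ : ∃ t', c = t' + 1 := ⟨c - 1, by omega⟩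
    have harith : t = s * t' := by
      have h := hcount1.symm.trans hcount2
      rw [hct] at h
      simp only [Nat.add_sub_cancel] at h
      have e1 : (s+1)*(t'*s) = t'*s*s + t'*s := by ring
      rw [e1] at h
      set A := t'*s*s with hA
      set B := t'*s with hB
      set C := s*t with hC
      have e3 : A = C := by
        have e2 : ((t'+1)*s) = B + s := by rw [hB]; ring
        rw [e2] at h
        omega
      have e4 : s * (s * t') = s * t := by
        rw [show s * (s * t') = t'*s*s from by ring, ← hA, ← hC]
        exact e3
      exact (Nat.eq_of_mul_eq_mul_left (by omega) e4).symm
    refine ⟨t', harith, ⟨?_, ?_⟩, ?_, ?_⟩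
    · -- axiom 1 of the restricted geometry
      intro p q hpq l m hpl hql hpm hqm
      exact Subtype.ext (hax1 p.1 q.1 (fun h => hpq (Subtype.ext h)) l.1 m.1 hpl hql hpm hqm)
    · -- axiom 2 of the restricted geometry
      intro p l hpl
      obtain ⟨q, ⟨hql, n, hpn, hqn⟩, hqu⟩ := hax2 p.1 l.1 hpl
      have hqH : q ∈ H := l.2 q hql
      have hpq : p.1 ≠ q := fun h => hpl (show S.I p.1 l.1 by rw [h]; exact hql)
      have hnf : ∀ u, S.I u n → u ∈ H := htwo n p.1 q p.2 hqH hpq hpn hqn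
      refine ⟨⟨q, hqH⟩, ⟨hql, ⟨⟨n, hnf⟩, hpn, hqn⟩⟩, ?_⟩
      rintro ⟨r, hrH⟩ ⟨hrl, ⟨nn, hpnn, hrnn⟩⟩
      exact Subtype.ext (hqu r ⟨hrl, ⟨nn.1, hpnn, hrnn⟩⟩)
    · -- each restricted line has s+1 points
      intro l
      show {p : ↥H | S.I p.1 l.1}.ncard = s + 1
      have himg : Subtype.val '' {p : ↥H | S.I p.1 l.1} = {p : S.P | S.I p l.1} := by
        ext u
        constructor
        · rintro ⟨⟨v, hvH⟩, hIv, rfl⟩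
          exact hIv
        · intro hu
          exact ⟨⟨u, l.2 u hu⟩, hu, rfl⟩
      rw [← Set.ncard_image_of_injective _ Subtype.val_injective, himg, hSord.1 l.1]
    · -- each restricted point is on t'+1 lines
      intro p
      show {l : ↥{l : S.L | ∀ q, S.I q l → q ∈ H} | S.I p.1 l.1}.ncard = t' + 1
      have himg : Subtype.val '' {l : ↥{l : S.L | ∀ q, S.I q l → q ∈ H} | S.I p.1 l.1} =
          {l : S.L | (∀ r, S.I r l → r ∈ H) ∧ S.I p.1 l} := by
        ext u
        constructor
        · rintro ⟨⟨m, hmf⟩, hIm, rfl⟩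
          exact ⟨hmf, hIm⟩
        · rintro ⟨hmf, hIm⟩
          exact ⟨⟨u, hmf⟩, hIm, rfl⟩
      rw [← Set.ncard_image_of_injective _ Subtype.val_injective, himg, hconst p.1 p.2, hct]
  · -- perp case
    right; left
    push_neg at hdisj
    obtain ⟨l₀, hl₀⟩ := hfull
    -- there is a second full line
    have hsecond : ∃ l', (∀ p, S.I p l' → p ∈ H) ∧ l' ≠ l₀ := by
      by_contra hcon
      push_neg at hcon
      -- then H ⊆ points of l₀
      have hHsub : ∀ p ∈ H, S.I p l₀ := by
        intro p hp
        obtain ⟨l, hlf, hpl⟩ := honfull p hp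
        by_cases h : l = l₀
        · exact h ▸ hpl
        · exact absurd hlf (by intro hf; exact h (hcon l hf))
      obtain ⟨z, hz⟩ := hzex
      obtain ⟨m₁, m₂, _, hm12, _, _, hzm₁, hzm₂, _⟩ := hSthick.1 z
      obtain ⟨h₁, ⟨h₁H, h₁m⟩, hu₁⟩ := hnonfull m₁ z hzm₁ hz
      obtain ⟨h₂, ⟨h₂H, h₂m⟩, hu₂⟩ := hnonfull m₂ z hzm₂ hz
      have hne : h₁ ≠ h₂ := by
        intro h
        subst h
        have hhz : h₁ ≠ z := fun h => hz (h ▸ h₁H)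
        exact hm12 (hax1 h₁ z hhz m₁ m₂ h₁m hzm₁ h₂m hzm₂)
      have hzl₀ : ¬ S.I z l₀ := fun h => hz (hl₀ z h)
      obtain ⟨q, _, hqu⟩ := hax2 z l₀ hzl₀
      have e₁ : h₁ = q := hqu h₁ ⟨hHsub h₁ h₁H, ⟨m₁, hzm₁, h₁m⟩⟩
      have e₂ : h₂ = q := hqu h₂ ⟨hHsub h₂ h₂H, ⟨m₂, hzm₂, h₂m⟩⟩
      exact hne (e₁.trans e₂.symm)
    obtain ⟨l₁, hl₁f, hl₁ne⟩ := hsecond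
    -- l₀ and l₁ meet in a unique point x
    obtain ⟨x, hxl₀, hxl₁⟩ : ∃ x, S.I x l₀ ∧ S.I x l₁ := by
      obtain ⟨p, hp⟩ := hdisj l₀ l₁ hl₀ hl₁f
      exact ⟨p, hp⟩
    have hxH : x ∈ H := hl₀ x hxl₀
    have hmeet_unique : ∀ y, S.I y l₀ → S.I y l₁ → y = x := by
      intro y hy₀ hy₁
      by_contra hne
      exact hl₁ne (hax1 y x hne l₁ l₀ hy₁ hxl₁ hy₀ hxl₀)
    -- every full line passes through x
    have hthrux : ∀ l : S.L, (∀ p, S.I p l → p ∈ H) → S.I x l := by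
      intro l hlf
      by_contra hxl
      obtain ⟨a, ha⟩ := hdisj l l₀ hlf hl₀
      obtain ⟨b, hb⟩ := hdisj l l₁ hlf hl₁f
      have hax : a ≠ x := fun h => hxl (h ▸ ha.1)
      have hbx : b ≠ x := fun h => hxl (h ▸ hb.1)
      have hab : a ≠ b := by
        intro h
        subst h
        exact hax (hmeet_unique a ha.2 hb.2)
      obtain ⟨c, _, hcu⟩ := hax2 x l hxl
      have e₁ : a = c := hcu a ⟨ha.1, ⟨l₀, hxl₀, ha.2⟩⟩
      have e₂ : b = c := hcu b ⟨hb.1, ⟨l₁, hxl₁, hb.2⟩⟩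
      exact hab (e₁.trans e₂.symm)
    -- every line through x is full
    have hallfull : ∀ m : S.L, S.I x m → ∀ p, S.I p m → p ∈ H := by
      intro m hxm
      by_contra hmf
      push_neg at hmf
      obtain ⟨z, hzm, hz⟩ := hmf
      have hzx : z ≠ x := fun h => hz (h ▸ hxH)
      -- any point of H collinear with z equals x
      have hkey : ∀ h', h' ∈ H → S.Collin z h' → h' = x := by
        intro h' hh'H hcol
        obtain ⟨l, hlf, hh'l⟩ := honfull h' hh'H
        have hxl : S.I x l := hthrux l hlf
        have hzl : ¬ S.I z l := fun h => hz (hlf z h)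
        obtain ⟨c, _, hcu⟩ := hax2 z l hzl
        have e₁ : h' = c := hcu h' ⟨hh'l, hcol⟩
        have e₂ : x = c := hcu x ⟨hxl, ⟨m, hzm, hxm⟩⟩
        exact e₁.trans e₂.symm
      obtain ⟨m₁, m₂, _, hm12, _, _, hzm₁, hzm₂, _⟩ := hSthick.1 z
      obtain ⟨h₁, ⟨h₁H, h₁m⟩, hu₁⟩ := hnonfull m₁ z hzm₁ hz
      obtain ⟨h₂, ⟨h₂H, h₂m⟩, hu₂⟩ := hnonfull m₂ z hzm₂ hz
      have hne : h₁ ≠ h₂ := by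
        intro h
        subst h
        have hhz : h₁ ≠ z := fun h => hz (h ▸ h₁H)
        exact hm12 (hax1 h₁ z hhz m₁ m₂ h₁m hzm₁ h₂m hzm₂)
      have e₁ : h₁ = x := hkey h₁ h₁H ⟨m₁, hzm₁, h₁m⟩
      have e₂ : h₂ = x := hkey h₂ h₂H ⟨m₂, hzm₂, h₂m⟩
      exact hne (e₁.trans e₂.symm)
    refine ⟨x, ?_⟩
    ext p
    constructor
    · intro hp
      obtain ⟨l, hlf, hpl⟩ := honfull p hp
      exact ⟨l, hthrux l hlf, hpl⟩
    · rintro ⟨l, hxl, hpl⟩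
      exact hallfull l hxl p hpl
end
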